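/- arXiv:1311.0194 — 3 statements merged into one kernel-verified Lean document; each statement's English description precedes it below -/
import Mathlib

section
/- The set M_{1,1} ∩ M_1^s, i.e. the set of martingales f ∈ M_{1,1} with f_n → 0 P-almost surely, is comeager in M_{1,1}. -/
open MeasureTheory Filter Set
open scoped ENNReal Topology

noncomputable section

namespace MartingalePaper

variable {Ω : Type}

/-- The discrete topology on `Set Ω`; each finite partition `D n` thus carries the
discrete topology, and `ℕ → Set Ω` the product topology. -/
instance : TopologicalSpace (Set Ω) := ⊥

/-- `(D n)` is a sequence of finite measurable partitions of `Ω`, each refined by the next. -/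
def IsPartitionSeq [MeasurableSpace Ω] (D : ℕ → Finset (Set Ω)) : Prop :=
  (∀ n, ∀ A ∈ D n, MeasurableSet A) ∧
  (∀ n, ∀ A ∈ D n, A.Nonempty) ∧
  (∀ n, (D n : Set (Set Ω)).PairwiseDisjoint id) ∧
  (∀ n, ⋃ A ∈ D n, A = (Set.univ : Set Ω)) ∧
  (∀ n, ∀ A ∈ D (n + 1), ∃ B ∈ D n, A ⊆ B)

/-- Standing Assumptions (A). -/
def AssumptionA [MeasurableSpace Ω] (P : Measure Ω) (D : ℕ → Finset (Set Ω)) : Prop :=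
  (∀ n, ∀ A ∈ D n, 0 < P A) ∧ (∀ n, ∀ A ∈ D n, ∃ m, n < m ∧ A ∉ D m)

/-- The compact metrizable space `K` associated to the filtration: decreasing chains of atoms. -/
abbrev Kt (D : ℕ → Finset (Set Ω)) : Type _ :=
  {x : ℕ → Set Ω // (∀ n, x n ∈ D n) ∧ ∀ n m : ℕ, n ≤ m → x m ⊆ x n}

/-- The function on `Ω` determined by the values `f n A` on the atoms `A ∈ D n`. -/
def mval (D : ℕ → Finset (Set Ω)) (f : ℕ → Set Ω → ℝ) (n : ℕ) (w : Ω) : ℝ :=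
  ∑ A ∈ D n, A.indicator (fun _ => f n A) w

/-- A martingale adapted to the filtration `(σ(D n))`, in its canonical representation by
the (a.e. constant) values on the atoms:  `f n A` is the value of the `n`-th function on
the atom `A ∈ D n`. -/
def IsMart [MeasurableSpace Ω] (P : Measure Ω) (D : ℕ → Finset (Set Ω))
    (f : ℕ → Set Ω → ℝ) : Prop :=
  (∀ n, ∀ A : Set Ω, A ∉ D n → f n A = 0) ∧
  ∀ n m : ℕ, n ≤ m → ∀ A ∈ D n,
    ∫ w in A, mval D f n w ∂P = ∫ w in A, mval D f m w ∂P

/-- `‖f_n‖_{L^p}`. -/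
def lpNorm [MeasurableSpace Ω] (P : Measure Ω) (D : ℕ → Finset (Set Ω)) (p : ℝ≥0∞)
    (f : ℕ → Set Ω → ℝ) (n : ℕ) : ℝ≥0∞ :=
  eLpNorm (mval D f n) p P

/-- `‖f‖_p = sup_n ‖f_n‖_{L^p}`. -/
def martNorm [MeasurableSpace Ω] (P : Measure Ω) (D : ℕ → Finset (Set Ω)) (p : ℝ≥0∞)
    (f : ℕ → Set Ω → ℝ) : ℝ≥0∞ :=
  ⨆ n, lpNorm P D p f n

/-- `M_p`, the space of `L^p`-bounded martingales adapted to the filtration. -/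
def Mart [MeasurableSpace Ω] (P : Measure Ω) (D : ℕ → Finset (Set Ω)) (p : ℝ≥0∞) : Type _ :=
  {f : ℕ → Set Ω → ℝ // IsMart P D f ∧ martNorm P D p f ≠ ∞}

/-- The norm topology on `M_p`: the topology generated by the balls of the norm `‖·‖_p`
(which is exactly the topology of this metric). -/
instance [MeasurableSpace Ω] (P : Measure Ω) (D : ℕ → Finset (Set Ω)) (p : ℝ≥0∞) :
    TopologicalSpace (Mart P D p) :=
  TopologicalSpace.generateFrom
    {s | ∃ (f : Mart P D p) (ε : ℝ≥0∞), 0 < ε ∧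
      s = {g : Mart P D p | martNorm P D p (fun k A => g.1 k A - f.1 k A) < ε}}

/-- `limsup f_n(x) = +∞` and `liminf f_n(x) = -∞`. -/
def DivergesAt (D : ℕ → Finset (Set Ω)) (f : ℕ → Set Ω → ℝ) (x : Kt D) : Prop :=
  Filter.limsup (fun n => ((f n (x.1 n) : ℝ) : EReal)) Filter.atTop = ⊤ ∧
  Filter.liminf (fun n => ((f n (x.1 n) : ℝ) : EReal)) Filter.atTop = ⊥

/-- `M_{p,1}`, the martingales of `‖·‖_p`-norm at most one. -/
def MartBall [MeasurableSpace Ω] (P : Measure Ω) (D : ℕ → Finset (Set Ω)) (p : ℝ≥0∞) :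
    Type _ :=
  {f : ℕ → Set Ω → ℝ // IsMart P D f ∧ martNorm P D p f ≤ 1}

/-- The topology of pointwise convergence on `M_{p,1}`, inherited from the product
`∏ₙ L^p(Σ_n)` with coordinatewise norm topologies: it is generated by the subbasic sets
given by a coordinate `n` and an `L^p`-ball in that coordinate. -/
instance [MeasurableSpace Ω] (P : Measure Ω) (D : ℕ → Finset (Set Ω)) (p : ℝ≥0∞) :
    TopologicalSpace (MartBall P D p) :=
  TopologicalSpace.generateFrom
    {s | ∃ (f : MartBall P D p) (n : ℕ) (ε : ℝ≥0∞), 0 < ε ∧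
      s = {g : MartBall P D p | lpNorm P D p (fun k A => g.1 k A - f.1 k A) n < ε}}

/-- The martingale `f` converges to `0` `P`-almost surely. -/
def AETendsto0 [MeasurableSpace Ω] (P : Measure Ω) (D : ℕ → Finset (Set Ω))
    (f : ℕ → Set Ω → ℝ) : Prop :=
  ∀ᵐ w ∂P, Filter.Tendsto (fun n => mval D f n w) Filter.atTop (nhds 0)

attribute [local instance 10] Classical.propDecidable

section Aux

variable [MeasurableSpace Ω] {P : Measure Ω} {D : ℕ → Finset (Set Ω)}

lemma exists_atom (hpart : IsPartitionSeq D) (n : ℕ) (w : Ω) : ∃ A ∈ D n, w ∈ A := by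
  have := hpart.2.2.2.1 n
  have hw : w ∈ ⋃ A ∈ D n, A := this.symm ▸ Set.mem_univ w
  simpa using hw

lemma atom_unique (hpart : IsPartitionSeq D) {n : ℕ} {A A' : Set Ω} (hA : A ∈ D n)
    (hA' : A' ∈ D n) {w : Ω} (h1 : w ∈ A) (h2 : w ∈ A') : A = A' := by
  by_contra hne
  exact (hpart.2.2.1 n hA hA' hne).ne_of_mem h1 h2 rfl

lemma sum_indicator_eq {M : Type*} [AddCommMonoid M] (hpart : IsPartitionSeq D) {n : ℕ}
    {A0 : Set Ω} (hA0 : A0 ∈ D n) {w : Ω} (hw : w ∈ A0) (v : Set Ω → M) :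
    ∑ A ∈ D n, A.indicator (fun _ => v A) w = v A0 := by
  rw [Finset.sum_eq_single_of_mem A0 hA0]
  · simp [Set.indicator_of_mem hw]
  · intro A hA hne
    have : w ∉ A := fun hwA => hne (atom_unique hpart hA hA0 hwA hw)
    simp [Set.indicator_of_notMem this]

lemma mval_apply (hpart : IsPartitionSeq D) {n : ℕ} {A0 : Set Ω} (hA0 : A0 ∈ D n) {w : Ω}
    (hw : w ∈ A0) (f : ℕ → Set Ω → ℝ) : mval D f n w = f n A0 :=
  sum_indicator_eq hpart hA0 hw _

lemma mval_congr {f f' : ℕ → Set Ω → ℝ} {n : ℕ} (h : ∀ A, f n A = f' n A) :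
    mval D f n = mval D f' n := by
  funext w; simp only [mval, h]

lemma mval_stronglyMeasurable (hpart : IsPartitionSeq D) (f : ℕ → Set Ω → ℝ) (n : ℕ) :
    StronglyMeasurable[MeasurableSpace.generateFrom (D n : Set (Set Ω))] (mval D f n) := by
  apply Finset.stronglyMeasurable_fun_sum
  intro A hA
  exact stronglyMeasurable_const.indicator (MeasurableSpace.measurableSet_generateFrom hA)

lemma gen_le (hpart : IsPartitionSeq D) (n : ℕ) :
    MeasurableSpace.generateFrom (D n : Set (Set Ω)) ≤ ‹MeasurableSpace Ω› :=
  MeasurableSpace.generateFrom_le (fun A hA => hpart.1 n A hA)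

lemma mval_sm (hpart : IsPartitionSeq D) (f : ℕ → Set Ω → ℝ) (n : ℕ) :
    StronglyMeasurable (mval D f n) :=
  (mval_stronglyMeasurable hpart f n).mono (gen_le hpart n)

lemma mval_integrable [IsProbabilityMeasure P] (hpart : IsPartitionSeq D)
    (f : ℕ → Set Ω → ℝ) (n : ℕ) : Integrable (mval D f n) P := by
  apply integrable_finset_sum
  intro A hA
  exact (integrable_const (f n A)).indicator (hpart.1 n A hA)

lemma refine_le (hpart : IsPartitionSeq D) {n m : ℕ} (hnm : n ≤ m) {B : Set Ω} (hB : B ∈ D m) :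
    ∃ A ∈ D n, B ⊆ A := by
  induction m, hnm using Nat.le_induction generalizing B with
  | base => exact ⟨B, hB, subset_rfl⟩
  | succ m hm ih =>
    obtain ⟨C, hC, hBC⟩ := hpart.2.2.2.2 m B hB
    obtain ⟨A, hA, hCA⟩ := ih hC
    exact ⟨A, hA, hBC.trans hCA⟩

lemma atom_subset_or_disjoint (hpart : IsPartitionSeq D) {n m : ℕ} (hnm : n ≤ m)
    {B A : Set Ω} (hB : B ∈ D m) (hA : A ∈ D n) : B ⊆ A ∨ B ∩ A = ∅ := by
  obtain ⟨A', hA', hBA'⟩ := refine_le hpart hnm hB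
  by_cases h : A' = A
  · exact Or.inl (h ▸ hBA')
  · right
    have hd : Disjoint A' A := hpart.2.2.1 n hA' hA h
    exact Set.eq_empty_of_subset_empty fun w ⟨hw1, hw2⟩ =>
      hd.ne_of_mem (hBA' hw1) hw2 rfl

lemma int_set [IsProbabilityMeasure P] (hpart : IsPartitionSeq D) (f : ℕ → Set Ω → ℝ)
    (n : ℕ) {E : Set Ω} (hE : MeasurableSet E) :
    ∫ w in E, mval D f n w ∂P = ∑ A ∈ D n, f n A * (P (A ∩ E)).toReal := by
  rw [show (fun w => mval D f n w) = fun w => ∑ A ∈ D n, A.indicator (fun _ => f n A) w from rfl]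
  rw [integral_finset_sum]
  · refine Finset.sum_congr rfl fun A hA => ?_
    rw [integral_indicator_const _ (hpart.1 n A hA), Measure.real_def, Measure.restrict_apply (hpart.1 n A hA)]
    rw [smul_eq_mul, mul_comm]
  · intro A hA
    exact ((integrable_const (f n A)).indicator (hpart.1 n A hA)).integrableOn

lemma lpNorm_eq [IsProbabilityMeasure P] (hpart : IsPartitionSeq D) (f : ℕ → Set Ω → ℝ)
    (n : ℕ) : lpNorm P D 1 f n = ∑ A ∈ D n, (‖f n A‖₊ : ℝ≥0∞) * P A := by
  rw [lpNorm, eLpNorm_one_eq_lintegral_enorm]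
  simp_rw [enorm_eq_nnnorm]
  have heq : (fun w => (‖mval D f n w‖₊ : ℝ≥0∞)) =
      fun w => ∑ A ∈ D n, A.indicator (fun _ => (‖f n A‖₊ : ℝ≥0∞)) w := by
    funext w
    obtain ⟨A0, hA0, hw⟩ := exists_atom hpart n w
    rw [mval_apply hpart hA0 hw, sum_indicator_eq hpart hA0 hw]
  rw [heq, lintegral_finset_sum]
  · refine Finset.sum_congr rfl fun A hA => ?_
    rw [lintegral_indicator_const (hpart.1 n A hA)]
  · intro A hA
    exact (measurable_const.indicator (hpart.1 n A hA))

lemma int_partition [IsProbabilityMeasure P] (hpart : IsPartitionSeq D) {φ : Ω → ℝ}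
    (hφ : Integrable φ P) (n : ℕ) {E : Set Ω} (hE : MeasurableSet E) :
    ∫ w in E, φ w ∂P = ∑ A ∈ D n, ∫ w in A ∩ E, φ w ∂P := by
  have hcov : ⋃ A ∈ D n, (A ∩ E) = E := by
    rw [← Set.iUnion₂_inter, hpart.2.2.2.1 n, Set.univ_inter]
  have h := integral_biUnion_finset (μ := P) (f := φ) (D n) (s := fun A => A ∩ E)
    (fun A hA => (hpart.1 n A hA).inter hE)
    (fun A hA B hB hne => ((hpart.2.2.1 n hA hB hne).mono Set.inter_subset_left
      Set.inter_subset_left))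
    (fun A _ => hφ.integrableOn)
  rw [hcov] at h
  exact h

lemma gen_subset_or_disjoint (hpart : IsPartitionSeq D) {n : ℕ} {s : Set Ω}
    (hs : MeasurableSet[MeasurableSpace.generateFrom (D n : Set (Set Ω))] s) :
    ∀ A ∈ D n, A ⊆ s ∨ A ∩ s = ∅ := by
  induction hs with
  | basic t ht =>
    intro A hA
    by_cases h : A = t
    · exact Or.inl (h ▸ subset_rfl)
    · right
      have hd : Disjoint A t := hpart.2.2.1 n hA ht h
      exact Set.disjoint_iff_inter_eq_empty.mp hd
  | empty => intro A _; right; simp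
  | compl t _ iht =>
    intro A hA
    rcases iht A hA with h | h
    · right
      exact Set.eq_empty_of_subset_empty fun w ⟨hw1, hw2⟩ => hw2 (h hw1)
    · left
      intro w hw
      exact fun hwt => (Set.eq_empty_iff_forall_notMem.mp h w) ⟨hw, hwt⟩
  | iUnion t _ iht =>
    intro A hA
    by_cases h : ∃ i, A ⊆ t i
    · obtain ⟨i, hi⟩ := h
      exact Or.inl (hi.trans (Set.subset_iUnion t i))
    · right
      push_neg at h
      have : ∀ i, A ∩ t i = ∅ := fun i => (iht i A hA).resolve_left (h i)
      rw [Set.inter_iUnion]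
      simpa using this

lemma mart_setIntegral [IsProbabilityMeasure P] (hpart : IsPartitionSeq D)
    {f : ℕ → Set Ω → ℝ} (hf : IsMart P D f) {n m : ℕ} (hnm : n ≤ m) {s : Set Ω}
    (hs : MeasurableSet[MeasurableSpace.generateFrom (D n : Set (Set Ω))] s) :
    ∫ w in s, mval D f n w ∂P = ∫ w in s, mval D f m w ∂P := by
  have hsm : MeasurableSet s := gen_le hpart n s hs
  rw [int_partition hpart (mval_integrable hpart f n) n hsm,
    int_partition hpart (mval_integrable hpart f m) n hsm]
  refine Finset.sum_congr rfl fun A hA => ?_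
  rcases gen_subset_or_disjoint hpart hs A hA with h | h
  · rw [Set.inter_eq_self_of_subset_left h]
    exact hf.2 n m hnm A hA
  · rw [h]; simp

end Aux


section Doob

variable [MeasurableSpace Ω] {P : Measure Ω} {D : ℕ → Finset (Set Ω)}

lemma atom_biUnion (hpart : IsPartitionSeq D) {n m : ℕ} (hnm : n ≤ m) {A : Set Ω}
    (hA : A ∈ D n) : A = ⋃ B ∈ (D m).filter (fun B => B ⊆ A), B := by
  ext w
  constructor
  · intro hw
    obtain ⟨B, hB, hwB⟩ := exists_atom hpart m w
    have hsub : B ⊆ A := by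
      rcases atom_subset_or_disjoint hpart hnm hB hA with h | h
      · exact h
      · exact (Set.eq_empty_iff_forall_notMem.mp h w ⟨hwB, hw⟩).elim
    exact Set.mem_biUnion (Finset.mem_filter.mpr ⟨hB, hsub⟩) hwB
  · intro hw
    obtain ⟨B, hB, hwB⟩ := Set.mem_iUnion₂.mp hw
    exact (Finset.mem_filter.mp hB).2 hwB

lemma gen_mono (hpart : IsPartitionSeq D) : Monotone (fun n =>
    MeasurableSpace.generateFrom (D n : Set (Set Ω))) := by
  intro n m hnm
  refine MeasurableSpace.generateFrom_le fun A hA => ?_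
  rw [atom_biUnion hpart hnm hA]
  exact Finset.measurableSet_biUnion _
    (fun B hB => MeasurableSpace.measurableSet_generateFrom (Finset.mem_filter.mp hB).1)

/-- The filtration generated by the partitions. -/
def filt [m0 : MeasurableSpace Ω] {D : ℕ → Finset (Set Ω)} (hpart : IsPartitionSeq D) :
    Filtration ℕ m0 where
  seq n := MeasurableSpace.generateFrom (D n : Set (Set Ω))
  mono' := gen_mono hpart
  le' n := gen_le hpart n

lemma mart_submartingale [IsProbabilityMeasure P] (hpart : IsPartitionSeq D)
    {f : ℕ → Set Ω → ℝ} (hf : IsMart P D f) :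
    Submartingale (fun n => mval D f n) (filt hpart) P := by
  refine submartingale_of_setIntegral_le ?_ (fun n => mval_integrable hpart f n) ?_
  · intro n
    exact mval_stronglyMeasurable hpart f n
  · intro i j hij s hs
    exact le_of_eq (mart_setIntegral hpart hf hij hs)

lemma mart_ae_tendsto [IsProbabilityMeasure P] (hpart : IsPartitionSeq D)
    {f : ℕ → Set Ω → ℝ} (hf : IsMart P D f) (hnorm : martNorm P D 1 f ≤ 1) :
    ∀ᵐ w ∂P, ∃ c, Tendsto (fun n => mval D f n w) atTop (𝓝 c) := by
  refine (mart_submartingale hpart hf).exists_ae_tendsto_of_bdd (R := 1) fun n => ?_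
  have h1 : lpNorm P D 1 f n ≤ 1 := le_trans (le_iSup _ n) hnorm
  simpa [lpNorm] using h1

end Doob



section Ball

variable [MeasurableSpace Ω] {P : Measure Ω} {D : ℕ → Finset (Set Ω)}

/-- thresholds -/
def delta (k : ℕ) : ℝ := 1 / ((k : ℝ) + 1)

lemma delta_pos (k : ℕ) : 0 < delta k := by unfold delta; positivity

/-- The open sets whose intersection is contained in the a.s.-to-0 martingales. -/
def Uset [MeasurableSpace Ω] (P : Measure Ω) (D : ℕ → Finset (Set Ω)) (k : ℕ) :
    Set (MartBall P D 1) :=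
  {h | ∃ m, k ≤ m ∧ P {w | delta k ≤ |mval D h.1 m w|} < ENNReal.ofReal (delta k)}

lemma value_le_lpNorm [IsProbabilityMeasure P] (hpart : IsPartitionSeq D)
    (f : ℕ → Set Ω → ℝ) {m : ℕ} {A : Set Ω} (hA : A ∈ D m) :
    (‖f m A‖₊ : ℝ≥0∞) * P A ≤ lpNorm P D 1 f m := by
  rw [lpNorm_eq hpart]
  exact Finset.single_le_sum (f := fun A => (‖f m A‖₊ : ℝ≥0∞) * P A)
    (fun _ _ => zero_le) hA

lemma lpNorm_diff_self [IsProbabilityMeasure P] (hpart : IsPartitionSeq D)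
    (g : ℕ → Set Ω → ℝ) (m : ℕ) :
    lpNorm P D 1 (fun j A => g j A - g j A) m = 0 := by
  rw [lpNorm_eq hpart]
  simp

lemma isOpen_Uset [IsProbabilityMeasure P] (hpart : IsPartitionSeq D)
    (hA : AssumptionA P D) (k : ℕ) : IsOpen (Uset P D k) := by
  rw [isOpen_iff_forall_mem_open]
  rintro g ⟨m, hkm, hPm⟩
  set δ := delta k with hδ
  set S := (D m).filter (fun A => |g.1 m A| < δ) with hS
  set ε := S.inf (fun A => ENNReal.ofReal (δ - |g.1 m A|) * P A) with hε
  have hεpos : 0 < ε := by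
    rcases S.eq_empty_or_nonempty with h | h
    · simp [hε, h]
    · rw [hε, ← Finset.inf'_eq_inf h, Finset.lt_inf'_iff]
      intro A hAS
      have hAm : A ∈ D m := (Finset.mem_filter.mp hAS).1
      have h1 : (0:ℝ) < δ - |g.1 m A| := by
        have := (Finset.mem_filter.mp hAS).2
        linarith
      exact ENNReal.mul_pos (ENNReal.ofReal_pos.mpr h1).ne' (hA.1 m A hAm).ne'
  refine ⟨{h : MartBall P D 1 | lpNorm P D 1 (fun j A => h.1 j A - g.1 j A) m < ε}, ?_, ?_, ?_⟩
  · -- subset of Uset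
    intro h hh
    refine ⟨m, hkm, lt_of_le_of_lt (measure_mono ?_) hPm⟩
    intro w hw
    obtain ⟨A, hAm, hwA⟩ := exists_atom hpart m w
    rw [Set.mem_setOf_eq, mval_apply hpart hAm hwA] at hw
    rw [Set.mem_setOf_eq, mval_apply hpart hAm hwA]
    by_contra hcon
    push_neg at hcon
    have hAS : A ∈ S := Finset.mem_filter.mpr ⟨hAm, hcon⟩
    have h1 : (‖h.1 m A - g.1 m A‖₊ : ℝ≥0∞) * P A < ENNReal.ofReal (δ - |g.1 m A|) * P A :=
      lt_of_le_of_lt (value_le_lpNorm hpart _ hAm)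
        (lt_of_lt_of_le hh (hε ▸ Finset.inf_le hAS))
    have hPA0 : P A ≠ 0 := (hA.1 m A hAm).ne'
    have hPAtop : P A ≠ ⊤ := measure_ne_top P A
    have h2 : (‖h.1 m A - g.1 m A‖₊ : ℝ≥0∞) < ENNReal.ofReal (δ - |g.1 m A|) :=
      (ENNReal.mul_lt_mul_iff_left hPA0 hPAtop).mp h1
    rw [← enorm_eq_nnnorm, Real.enorm_eq_ofReal_abs, ENNReal.ofReal_lt_ofReal_iff_of_nonneg (abs_nonneg _)] at h2
    have : |h.1 m A| < δ := by
      have := abs_sub_abs_le_abs_sub (h.1 m A) (g.1 m A)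
      linarith
    linarith
  · -- open
    exact TopologicalSpace.isOpen_generateFrom_of_mem ⟨g, m, ε, hεpos, rfl⟩
  · -- g mem
    show lpNorm P D 1 (fun j A => g.1 j A - g.1 j A) m < ε
    rw [lpNorm_diff_self hpart]
    exact hεpos

lemma iInter_Uset_subset [IsProbabilityMeasure P] (hpart : IsPartitionSeq D) :
    (⋂ k, Uset P D k) ⊆ {f : MartBall P D 1 | AETendsto0 P D f.1} := by
  intro f hf
  have hmem : ∀ k, f ∈ Uset P D k := fun k => Set.mem_iInter.mp hf k
  choose m hm1 hm2 using hmem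
  have htim : TendstoInMeasure P (fun k => mval D f.1 (m k)) atTop (fun _ => (0:ℝ)) := by
    rw [tendstoInMeasure_iff_dist]
    intro ε hε
    simp only [dist_zero_right, Real.norm_eq_abs]
    have hub : ∀ᶠ k in atTop, P {x | ε ≤ |mval D f.1 (m k) x|} ≤ ENNReal.ofReal (delta k) := by
      obtain ⟨K, hK⟩ := exists_nat_gt (1/ε)
      filter_upwards [eventually_ge_atTop K] with k hk
      have hδε : delta k ≤ ε := by
        rw [delta, div_le_iff₀ (by positivity)]
        rw [div_lt_iff₀ hε] at hK
        have : (K:ℝ) ≤ (k:ℝ) := by exact_mod_cast hk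
        nlinarith
      refine le_trans (measure_mono ?_) (hm2 k).le
      intro x hx
      exact le_trans hδε hx
    refine tendsto_of_tendsto_of_tendsto_of_le_of_le' tendsto_const_nhds ?_
      (Eventually.of_forall fun k => zero_le) hub
    have h0 : Tendsto (fun k : ℕ => delta k) atTop (𝓝 0) :=
      tendsto_one_div_add_atTop_nhds_zero_nat
    simpa using ENNReal.tendsto_ofReal h0
  obtain ⟨ns, hns, hae⟩ := htim.exists_seq_tendsto_ae
  have hDoob := mart_ae_tendsto hpart f.2.1 f.2.2
  filter_upwards [hae, hDoob] with w h1 h2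
  obtain ⟨c, hc⟩ := h2
  have hmono : Tendsto (fun i => m (ns i)) atTop atTop :=
    tendsto_atTop_mono (fun i => le_trans (hns.le_apply) (hm1 (ns i))) tendsto_id
  have h3 : Tendsto (fun i => mval D f.1 (m (ns i)) w) atTop (𝓝 c) := hc.comp hmono
  have hc0 : c = 0 := tendsto_nhds_unique h3 h1
  exact hc0 ▸ hc

end Ball

section Chain

variable [MeasurableSpace Ω] {P : Measure Ω} {D : ℕ → Finset (Set Ω)}

/-- Next atom: a sub-atom of minimal measure. -/
def nextAtom (P : Measure Ω) (D : ℕ → Finset (Set Ω)) (m : ℕ) (B : Set Ω) : Set Ω :=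
  if h : ((D (m+1)).filter (fun C => C ⊆ B)).Nonempty then
    Classical.choose (Finset.exists_min_image _ (fun C => P C) h)
  else ∅

lemma filter_next_nonempty (hpart : IsPartitionSeq D) {m : ℕ} {B : Set Ω} (hB : B ∈ D m) :
    ((D (m+1)).filter (fun C => C ⊆ B)).Nonempty := by
  obtain ⟨w, hw⟩ := hpart.2.1 m B hB
  obtain ⟨C, hC, hwC⟩ := exists_atom hpart (m+1) w
  rcases atom_subset_or_disjoint hpart (Nat.le_succ m) hC hB with h | h
  · exact ⟨C, Finset.mem_filter.mpr ⟨hC, h⟩⟩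
  · exact absurd h (by simp [Set.eq_empty_iff_forall_notMem]; exact ⟨w, hwC, hw⟩)

lemma nextAtom_spec (hpart : IsPartitionSeq D) {m : ℕ} {B : Set Ω} (hB : B ∈ D m) :
    nextAtom P D m B ∈ D (m+1) ∧ nextAtom P D m B ⊆ B ∧
      ∀ C ∈ D (m+1), C ⊆ B → P (nextAtom P D m B) ≤ P C := by
  have h := filter_next_nonempty hpart hB
  rw [nextAtom, dif_pos h]
  obtain ⟨h1, h2⟩ := Classical.choose_spec (Finset.exists_min_image _ (fun C => P C) h)
  rw [Finset.mem_filter] at h1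
  exact ⟨h1.1, h1.2, fun C hC hCB => h2 C (Finset.mem_filter.mpr ⟨hC, hCB⟩)⟩

lemma nextAtom_dichotomy (hpart : IsPartitionSeq D) {m : ℕ} {B : Set Ω} (hB : B ∈ D m) :
    nextAtom P D m B = B ∨ P (nextAtom P D m B) ≤ P B / 2 := by
  obtain ⟨h1, h2, h3⟩ := nextAtom_spec hpart hB (P := P)
  by_cases hex : ∃ C ∈ D (m+1), C ⊆ B ∧ C ≠ nextAtom P D m B
  · obtain ⟨C, hC, hCB, hne⟩ := hex
    right
    have hdisj : Disjoint (nextAtom P D m B) C := hpart.2.2.1 (m+1) h1 hC (Ne.symm hne)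
    have hmeas : MeasurableSet C := hpart.1 (m+1) C hC
    have hunion : P (nextAtom P D m B) + P C ≤ P B := by
      rw [← measure_union hdisj hmeas]
      exact measure_mono (Set.union_subset h2 hCB)
    have hmin : P (nextAtom P D m B) ≤ P C := h3 C hC hCB
    rw [ENNReal.le_div_iff_mul_le (Or.inl two_ne_zero) (Or.inl ENNReal.ofNat_ne_top), mul_two]
    exact le_trans (add_le_add le_rfl hmin) hunion
  · left
    push_neg at hex
    have hBU := atom_biUnion hpart (Nat.le_succ m) hB
    have : ⋃ C ∈ (D (m+1)).filter (fun C => C ⊆ B), C ⊆ nextAtom P D m B := by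
      intro w hw
      obtain ⟨C, hC, hwC⟩ := Set.mem_iUnion₂.mp hw
      rw [Finset.mem_filter] at hC
      rcases eq_or_ne C (nextAtom P D m B) with h | h
      · exact h ▸ hwC
      · exact absurd (hex C hC.1 hC.2) (by simp [h])
    have hB2 : B ⊆ nextAtom P D m B := fun w hw => this (hBU ▸ hw)
    exact Set.Subset.antisymm h2 hB2

/-- The chain of atoms starting at `A` at level `N`, decreasing in measure. -/
def chainFn (P : Measure Ω) (D : ℕ → Finset (Set Ω)) (N : ℕ) (A : Set Ω) : ℕ → Set Ω :=
  fun m => Nat.rec A (fun m ih => if m + 1 ≤ N then A else nextAtom P D m ih) m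

lemma chainFn_le {N m : ℕ} (hm : m ≤ N) {A : Set Ω} : chainFn P D N A m = A := by
  cases m with
  | zero => rfl
  | succ l => exact if_pos hm

lemma chainFn_succ {N m : ℕ} (hm : N ≤ m) {A : Set Ω} :
    chainFn P D N A (m + 1) = nextAtom P D m (chainFn P D N A m) :=
  if_neg (by omega)

lemma chainFn_mem (hpart : IsPartitionSeq D) {N : ℕ} {A : Set Ω} (hA : A ∈ D N) :
    ∀ m, N ≤ m → chainFn P D N A m ∈ D m := by
  intro m hm
  induction m, hm using Nat.le_induction with
  | base => rw [chainFn_le le_rfl]; exact hA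
  | succ m hm ih =>
    rw [chainFn_succ hm]
    exact (nextAtom_spec hpart ih).1

lemma chainFn_anti (hpart : IsPartitionSeq D) {N : ℕ} {A : Set Ω} (hA : A ∈ D N)
    {m m' : ℕ} (hm : N ≤ m) (hmm : m ≤ m') : chainFn P D N A m' ⊆ chainFn P D N A m := by
  induction m', hmm using Nat.le_induction with
  | base => exact subset_rfl
  | succ m' hmm ih =>
    rw [chainFn_succ (le_trans hm hmm)]
    exact subset_trans (nextAtom_spec hpart (chainFn_mem hpart hA m' (le_trans hm hmm))).2.1 ih

lemma chainFn_halve (hpart : IsPartitionSeq D) (hAssum : AssumptionA P D) {N : ℕ}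
    {A : Set Ω} (hA : A ∈ D N) {m : ℕ} (hm : N ≤ m) :
    ∃ m', m < m' ∧ P (chainFn P D N A m') ≤ P (chainFn P D N A m) / 2 := by
  obtain ⟨m'', hm'', hnot⟩ := hAssum.2 m (chainFn P D N A m) (chainFn_mem hpart hA m hm)
  have hj : ∃ j, m ≤ j ∧ j < m'' ∧ chainFn P D N A (j+1) ≠ chainFn P D N A j := by
    by_contra hc
    push_neg at hc
    have heq : ∀ l, m ≤ l → l ≤ m'' → chainFn P D N A l = chainFn P D N A m := by
      intro l hml
      induction l, hml using Nat.le_induction with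
      | base => intro _; rfl
      | succ l hml ih =>
        intro hl
        rw [hc l hml (by omega), ih (by omega)]
    exact hnot ((heq m'' (le_of_lt hm'') le_rfl) ▸
      chainFn_mem hpart hA m'' (le_trans hm (le_of_lt hm'')))
  obtain ⟨j, hmj, hjm, hne⟩ := hj
  have hNj : N ≤ j := le_trans hm hmj
  have hd := nextAtom_dichotomy (P := P) hpart (chainFn_mem (P := P) hpart hA j hNj)
  rw [← chainFn_succ hNj] at hd
  rcases hd with h | h
  · exact absurd h hne
  · refine ⟨j + 1, by omega, le_trans h ?_⟩
    exact ENNReal.div_le_div_right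
      (measure_mono (chainFn_anti hpart hA hm hmj)) 2

lemma chainFn_small [IsProbabilityMeasure P] (hpart : IsPartitionSeq D)
    (hAssum : AssumptionA P D) {N : ℕ} {A : Set Ω} (hA : A ∈ D N) {η : ℝ≥0∞} (hη : η ≠ 0) :
    ∃ M, N ≤ M ∧ P (chainFn P D N A M) < η := by
  have hpow : ∀ i : ℕ, ∃ M, N ≤ M ∧ P (chainFn P D N A M) ≤ 2⁻¹ ^ i := by
    intro i
    induction i with
    | zero =>
      refine ⟨N, le_rfl, ?_⟩
      simp only [pow_zero]
      exact prob_le_one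
    | succ i ih =>
      obtain ⟨M, hNM, hle⟩ := ih
      obtain ⟨M', hMM', hle'⟩ := chainFn_halve hpart hAssum hA hNM
      refine ⟨M', le_trans hNM (le_of_lt hMM'), ?_⟩
      calc P (chainFn P D N A M') ≤ P (chainFn P D N A M) / 2 := hle'
        _ ≤ (2⁻¹ ^ i) / 2 := ENNReal.div_le_div_right hle 2
        _ = 2⁻¹ ^ (i + 1) := by
            rw [pow_succ, div_eq_mul_inv]
  obtain ⟨i, hi⟩ := ENNReal.exists_inv_two_pow_lt hη
  obtain ⟨M, hNM, hle⟩ := hpow i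
  exact ⟨M, hNM, lt_of_le_of_lt hle hi⟩

end Chain

section Density

variable [MeasurableSpace Ω] {P : Measure Ω} {D : ℕ → Finset (Set Ω)}

lemma int_atom [IsProbabilityMeasure P] (hpart : IsPartitionSeq D) (f : ℕ → Set Ω → ℝ)
    {n : ℕ} {A : Set Ω} (hA : A ∈ D n) :
    ∫ w in A, mval D f n w ∂P = f n A * (P A).toReal := by
  rw [int_set hpart f n (hpart.1 n A hA), Finset.sum_eq_single_of_mem A hA]
  · rw [Set.inter_self]
  · intro B hB hne
    have hd : B ∩ A = ∅ := Set.disjoint_iff_inter_eq_empty.mp (hpart.2.2.1 n hB hA hne)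
    rw [hd]; simp

lemma lpNorm_congr {f f' : ℕ → Set Ω → ℝ} {n : ℕ} (h : ∀ A, f n A = f' n A) :
    lpNorm P D 1 f n = lpNorm P D 1 f' n := by
  unfold lpNorm
  rw [mval_congr h]

lemma exists_approx [IsProbabilityMeasure P] (hpart : IsPartitionSeq D)
    (hAssum : AssumptionA P D) (g : MartBall P D 1) (N k : ℕ) :
    ∃ h : MartBall P D 1, (∀ n, n ≤ N → h.1 n = g.1 n) ∧ h ∈ Uset P D k := by
  classical
  set δ := delta k with hδdef
  have hδpos : 0 < δ := delta_pos k
  set card : ℕ := (D N).card with hcard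
  set η : ℝ≥0∞ := ENNReal.ofReal (δ / (card + 1)) with hη
  have hη0 : η ≠ 0 := by
    rw [hη]; exact (ENNReal.ofReal_pos.mpr (by positivity)).ne'
  have hMex : ∀ A, A ∈ D N → ∃ M, N ≤ M ∧ P (chainFn P D N A M) < η :=
    fun A hA => chainFn_small hpart hAssum hA hη0
  choose! Mf hMf1 hMf2 using hMex
  set M : ℕ := max (max k (N+1)) ((D N).sup Mf) with hM
  have hNM : N < M :=
    lt_of_lt_of_le (Nat.lt_succ_self N) (le_trans (le_max_right k (N+1)) (le_max_left _ _))
  have hkM : k ≤ M := le_trans (le_max_left _ _) (le_max_left _ _)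
  have hsmall : ∀ A ∈ D N, P (chainFn P D N A M) < η := by
    intro A hA
    refine lt_of_le_of_lt (measure_mono (chainFn_anti hpart hA (hMf1 A hA) ?_)) (hMf2 A hA)
    exact le_trans (Finset.le_sup hA) (le_max_right _ _)
  set c : Set Ω → ℕ → Set Ω := fun A n => chainFn P D N A n with hc
  set v : Set Ω → ℝ := fun A => ∫ w in A, mval D g.1 N w ∂P with hv
  set F : ℕ → Set Ω → ℝ := fun n A' =>
    if n ≤ N then g.1 n A'
    else ∑ A ∈ D N, (if A' = c A n then v A / (P (c A n)).toReal else 0) with hF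
  have hFle : ∀ n, n ≤ N → ∀ A', F n A' = g.1 n A' := fun n hn A' => if_pos hn
  have hFgt : ∀ n, N < n → ∀ A', F n A' =
      ∑ A ∈ D N, (if A' = c A n then v A / (P (c A n)).toReal else 0) :=
    fun n hn A' => if_neg (by omega)
  have hcmem : ∀ A ∈ D N, ∀ n, N ≤ n → c A n ∈ D n :=
    fun A hA n hn => chainFn_mem hpart hA n hn
  have hcsub : ∀ A ∈ D N, ∀ n, N ≤ n → c A n ⊆ A := by
    intro A hA n hn
    have h1 := chainFn_anti (P := P) hpart hA le_rfl hn
    rwa [chainFn_le le_rfl] at h1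
  have hcpos : ∀ A ∈ D N, ∀ n, N ≤ n → 0 < P (c A n) :=
    fun A hA n hn => hAssum.1 n _ (hcmem A hA n hn)
  have hcne : ∀ A ∈ D N, ∀ n, N ≤ n → (P (c A n)).toReal ≠ 0 := by
    intro A hA n hn
    exact (ENNReal.toReal_pos (hcpos A hA n hn).ne' (measure_ne_top P _)).ne'
  have hcanti : ∀ A ∈ D N, ∀ n m', N ≤ n → n ≤ m' → c A m' ⊆ c A n :=
    fun A hA n m' hn hnm => chainFn_anti hpart hA hn hnm
  have hcinj : ∀ n, N ≤ n → ∀ A ∈ D N, ∀ B ∈ D N, c A n = c B n → A = B := by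
    intro n hn A hA B hB hcc
    by_contra hne
    obtain ⟨w, hw⟩ := hpart.2.1 n _ (hcmem A hA n hn)
    exact (hpart.2.2.1 N hA hB hne).ne_of_mem (hcsub A hA n hn hw)
      (hcsub B hB n hn (hcc ▸ hw)) rfl
  have hvA : ∀ A ∈ D N, v A = g.1 N A * (P A).toReal := fun A hA => int_atom hpart g.1 hA
  have hint : ∀ n, N < n → ∀ E : Set Ω, MeasurableSet E →
      ∫ w in E, mval D F n w ∂P =
        ∑ A ∈ D N, (v A / (P (c A n)).toReal) * (P (c A n ∩ E)).toReal := by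
    intro n hn E hE
    rw [int_set hpart F n hE]
    have hterm : ∀ A' ∈ D n, F n A' * (P (A' ∩ E)).toReal =
        ∑ A ∈ D N, (if A' = c A n then v A / (P (c A n)).toReal else 0) *
          (P (A' ∩ E)).toReal := by
      intro A' _
      rw [hFgt n hn A', Finset.sum_mul]
    rw [Finset.sum_congr rfl hterm, Finset.sum_comm]
    refine Finset.sum_congr rfl fun A hA => ?_
    rw [Finset.sum_eq_single_of_mem (c A n) (hcmem A hA n (le_of_lt hn))]
    · simp
    · intro B _ hne
      rw [if_neg hne, zero_mul]
  have hmart : IsMart P D F := by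
    constructor
    · intro n A' hA'
      by_cases hn : n ≤ N
      · rw [hFle n hn]; exact g.2.1.1 n A' hA'
      · push_neg at hn
        rw [hFgt n hn]
        refine Finset.sum_eq_zero fun A hA => ?_
        exact if_neg fun heq => hA' (by rw [heq]; exact hcmem A hA n (le_of_lt hn))
    · intro n m hnm E hE
      by_cases hm : m ≤ N
      · rw [mval_congr (hFle n (le_trans hnm hm)), mval_congr (hFle m hm)]
        exact g.2.1.2 n m hnm E hE
      · push_neg at hm
        have hEmeas : MeasurableSet E := hpart.1 n E hE
        by_cases hn : n ≤ N
        · rw [mval_congr (hFle n hn), g.2.1.2 n N hn E hE,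
            int_set hpart g.1 N hEmeas, hint m hm E hEmeas]
          refine Finset.sum_congr rfl fun A hA => ?_
          rcases atom_subset_or_disjoint hpart hn hA hE with hsub | hdis
          · rw [Set.inter_eq_self_of_subset_left hsub,
              Set.inter_eq_self_of_subset_left
                (subset_trans (hcsub A hA m (le_of_lt hm)) hsub),
              div_mul_cancel₀ _ (hcne A hA m (le_of_lt hm)), hvA A hA]
          · have h2 : c A m ∩ E = ∅ := by
              have h3 := Set.inter_subset_inter_left E (hcsub A hA m (le_of_lt hm))
              rw [hdis] at h3
              exact Set.eq_empty_of_subset_empty h3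
            rw [hdis, h2]; simp
        · push_neg at hn
          rw [hint n hn E hEmeas, hint m hm E hEmeas]
          refine Finset.sum_congr rfl fun A hA => ?_
          rcases eq_or_ne E (c A n) with heq | hne
          · have hsub : c A m ⊆ E := by
              rw [heq]; exact hcanti A hA n m (le_of_lt hn) hnm
            have h1 : c A n ∩ E = c A n := by rw [heq, Set.inter_self]
            have h2 : c A m ∩ E = c A m := Set.inter_eq_self_of_subset_left hsub
            rw [h1, h2, div_mul_cancel₀ _ (hcne A hA n (le_of_lt hn)),
              div_mul_cancel₀ _ (hcne A hA m (le_trans (le_of_lt hn) hnm))]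
          · have hd : c A n ∩ E = ∅ := by
              rw [Set.inter_comm]
              exact Set.disjoint_iff_inter_eq_empty.mp
                (hpart.2.2.1 n hE (hcmem A hA n (le_of_lt hn)) hne)
            have hd2 : c A m ∩ E = ∅ := by
              have h3 := Set.inter_subset_inter_left E (hcanti A hA n m (le_of_lt hn) hnm)
              rw [hd] at h3
              exact Set.eq_empty_of_subset_empty h3
            rw [hd, hd2]; simp
  have hlp : ∀ n, N < n → lpNorm P D 1 F n ≤ lpNorm P D 1 g.1 N := by
    intro n hn
    have hn' := le_of_lt hn
    rw [lpNorm_eq hpart]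
    set T := (D N).image (fun A => c A n) with hT
    have hTsub : T ⊆ D n := by
      intro B hB
      obtain ⟨A, hA, rfl⟩ := Finset.mem_image.mp hB
      exact hcmem A hA n hn'
    have hzero : ∀ A' ∈ D n, A' ∉ T → (‖F n A'‖₊ : ℝ≥0∞) * P A' = 0 := by
      intro A' _ hA'
      have hF0 : F n A' = 0 := by
        rw [hFgt n hn]
        refine Finset.sum_eq_zero fun A hA => if_neg fun heq => hA' ?_
        exact Finset.mem_image.mpr ⟨A, hA, heq.symm⟩
      rw [hF0]; simp
    rw [← Finset.sum_subset hTsub (fun A' h1 h2 => hzero A' h1 h2),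
      Finset.sum_image (fun A hA B hB hcc => hcinj n hn' A hA B hB hcc)]
    have hterm : ∀ A ∈ D N, (‖F n (c A n)‖₊ : ℝ≥0∞) * P (c A n) = ENNReal.ofReal |v A| := by
      intro A hA
      have hFv : F n (c A n) = v A / (P (c A n)).toReal := by
        rw [hFgt n hn, Finset.sum_eq_single_of_mem A hA]
        · rw [if_pos rfl]
        · intro B hB hne
          exact if_neg fun heq => hne (hcinj n hn' A hA B hB heq).symm
      rw [hFv, ← enorm_eq_nnnorm, Real.enorm_eq_ofReal_abs, abs_div, abs_of_nonneg ENNReal.toReal_nonneg,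
        ENNReal.ofReal_div_of_pos
          (ENNReal.toReal_pos (hcpos A hA n hn').ne' (measure_ne_top P _)),
        ENNReal.ofReal_toReal (measure_ne_top P _),
        ENNReal.div_mul_cancel (hcpos A hA n hn').ne' (measure_ne_top P _)]
    rw [Finset.sum_congr rfl hterm,
      ← ENNReal.ofReal_sum_of_nonneg (fun A _ => abs_nonneg (v A))]
    have hφ : Integrable (fun w => |mval D g.1 N w|) P := (mval_integrable hpart g.1 N).abs
    have hb1 : ∑ A ∈ D N, |v A| ≤ ∫ w, |mval D g.1 N w| ∂P := by
      have hpartn : ∫ w, |mval D g.1 N w| ∂P =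
          ∑ A ∈ D N, ∫ w in A, |mval D g.1 N w| ∂P := by
        have h4 := int_partition hpart hφ N (MeasurableSet.univ)
        simpa [Set.inter_univ] using h4
      rw [hpartn]
      refine Finset.sum_le_sum fun A _ => ?_
      have h5 := norm_integral_le_integral_norm (μ := P.restrict A) (fun w => mval D g.1 N w)
      simpa [Real.norm_eq_abs] using h5
    calc ENNReal.ofReal (∑ A ∈ D N, |v A|) ≤ ENNReal.ofReal (∫ w, |mval D g.1 N w| ∂P) :=
        ENNReal.ofReal_le_ofReal hb1
      _ = lpNorm P D 1 g.1 N := by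
          rw [lpNorm, eLpNorm_one_eq_lintegral_enorm,
            ← ofReal_integral_norm_eq_lintegral_enorm (mval_integrable hpart g.1 N)]
          simp [Real.norm_eq_abs]
  have hnorm : martNorm P D 1 F ≤ 1 := by
    refine iSup_le fun n => ?_
    by_cases hn : n ≤ N
    · rw [lpNorm_congr (hFle n hn)]
      exact le_trans (le_iSup (lpNorm P D 1 g.1) n) g.2.2
    · push_neg at hn
      exact le_trans (hlp n hn) (le_trans (le_iSup (lpNorm P D 1 g.1) N) g.2.2)
  have hUmem : P {w | δ ≤ |mval D F M w|} < ENNReal.ofReal δ := by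
    have hsubset : {w | δ ≤ |mval D F M w|} ⊆ ⋃ A ∈ D N, c A M := by
      intro w hw
      obtain ⟨A', hA', hwA'⟩ := exists_atom hpart M w
      rw [Set.mem_setOf_eq, mval_apply hpart hA' hwA'] at hw
      by_cases hex : ∃ A ∈ D N, A' = c A M
      · obtain ⟨A, hA, rfl⟩ := hex
        exact Set.mem_iUnion₂.mpr ⟨A, hA, hwA'⟩
      · push_neg at hex
        have hF0 : F M A' = 0 := by
          rw [hFgt M hNM]
          exact Finset.sum_eq_zero fun A hA => if_neg (hex A hA)
        rw [hF0] at hw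
        simp at hw
        linarith
    refine lt_of_le_of_lt (measure_mono hsubset) ?_
    refine lt_of_le_of_lt (measure_biUnion_finset_le _ _) ?_
    have hsum : ∑ A ∈ D N, P (c A M) ≤ (card : ℝ≥0∞) * η := by
      calc ∑ A ∈ D N, P (c A M) ≤ ∑ _A ∈ D N, η :=
            Finset.sum_le_sum fun A hA => (hsmall A hA).le
        _ = (card : ℝ≥0∞) * η := by rw [Finset.sum_const, nsmul_eq_mul, hcard]
    refine lt_of_le_of_lt hsum ?_
    rw [hη, ← ENNReal.ofReal_natCast card, ← ENNReal.ofReal_mul (Nat.cast_nonneg card)]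
    rw [ENNReal.ofReal_lt_ofReal_iff hδpos]
    have hc1 : (card : ℝ) / ((card : ℝ) + 1) < 1 := by
      rw [div_lt_one (by positivity)]; linarith
    calc (card : ℝ) * (δ / ((card : ℝ) + 1)) = ((card : ℝ) / ((card : ℝ) + 1)) * δ := by
          ring
      _ < 1 * δ := by nlinarith
      _ = δ := one_mul δ
  refine ⟨⟨F, hmart, hnorm⟩, ?_, M, hkM, hUmem⟩
  intro n hn
  funext A'
  exact hFle n hn A'

lemma dense_Uset [IsProbabilityMeasure P] (hpart : IsPartitionSeq D)
    (hAssum : AssumptionA P D) (k : ℕ) : Dense (Uset P D k) := by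
  have hbasis := TopologicalSpace.isTopologicalBasis_of_subbasis
    (t := (inferInstance : TopologicalSpace (MartBall P D 1)))
    (s := {s | ∃ (f : MartBall P D 1) (n : ℕ) (ε : ℝ≥0∞), 0 < ε ∧
      s = {g : MartBall P D 1 | lpNorm P D 1 (fun j A => g.1 j A - f.1 j A) n < ε}}) rfl
  rw [hbasis.dense_iff]
  rintro o ⟨Fam, ⟨hFfin, hFS⟩, rfl⟩ ⟨g, hg⟩
  have hchoice : ∀ s : Set (MartBall P D 1), ∃ (f : MartBall P D 1) (n : ℕ) (ε : ℝ≥0∞),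
      s ∈ Fam → (0 < ε ∧
      s = {h : MartBall P D 1 | lpNorm P D 1 (fun j A => h.1 j A - f.1 j A) n < ε}) := by
    intro s
    by_cases hs : s ∈ Fam
    · obtain ⟨f, n, ε, h1, h2⟩ := hFS hs
      exact ⟨f, n, ε, fun _ => ⟨h1, h2⟩⟩
    · exact ⟨g, 0, 1, fun h => absurd h hs⟩
  choose cf cn ceps hprop using hchoice
  have hseq : ∀ s ∈ Fam, s = {h : MartBall P D 1 |
      lpNorm P D 1 (fun j A => h.1 j A - (cf s).1 j A) (cn s) < ceps s} :=
    fun s hs => (hprop s hs).2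
  obtain ⟨N, hN⟩ := (hFfin.image cn).bddAbove
  obtain ⟨h, hcoord, hU⟩ := exists_approx hpart hAssum g N k
  refine ⟨h, Set.mem_inter ?_ hU⟩
  rw [Set.mem_sInter]
  intro s hs
  have hns : cn s ≤ N := hN (Set.mem_image_of_mem cn hs)
  have hgs := Set.mem_sInter.mp hg s hs
  rw [hseq s hs] at hgs ⊢
  show lpNorm P D 1 (fun j A => h.1 j A - (cf s).1 j A) (cn s) < ceps s
  have heqc : ∀ A, h.1 (cn s) A - (cf s).1 (cn s) A = g.1 (cn s) A - (cf s).1 (cn s) A := by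
    intro A; rw [hcoord (cn s) hns]
  rw [lpNorm_congr (f' := fun j A => g.1 j A - (cf s).1 j A) heqc]
  exact hgs

end Density


/-- Proposition (p:residual): the set `M_{1,1} ∩ M₁ˢ` of martingales of norm at most one
converging to `0` `P`-almost surely is comeager in `M_{1,1}` (with the topology of
pointwise convergence). -/
theorem statement8 [MeasurableSpace Ω] (P : Measure Ω) [IsProbabilityMeasure P]
    (D : ℕ → Finset (Set Ω)) (hpart : IsPartitionSeq D) (hA : AssumptionA P D) :
    {f : MartBall P D 1 | AETendsto0 P D f.1} ∈ residual (MartBall P D 1) := by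
  rw [mem_residual_iff]
  refine ⟨Set.range (Uset P D), ?_, ?_, Set.countable_range _, ?_⟩
  · rintro t ⟨k, rfl⟩; exact isOpen_Uset hpart hA k
  · rintro t ⟨k, rfl⟩; exact dense_Uset hpart hA k
  · rw [Set.sInter_range]; exact iInter_Uset_subset hpart


end MartingalePaper
end
end

section
/- Let N ∈ ℕ be given. Then there is a martingale f = (f_n) adapted to the filtration (Σ_n) with the following properties: (a) f_1 = … = f_N = 0; (b) f is L^p-bounded for each p ∈ [1, ∞), i.e. sup_n ‖f_n‖_{L^p} < ∞ for each such p; (c) the set {x ∈ K : lim_{n→∞} f_n(x) = +∞} is dense in K; (d) the set {x ∈ K : lim_{n→∞} f_n(x) = −∞} is dense in K. -/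
open MeasureTheory Filter Set
open scoped ENNReal Topology

noncomputable section

namespace MartingalePaper

variable {Ω : Type}

set_option linter.unusedSectionVars false
set_option linter.unusedVariables false
set_option maxHeartbeats 1000000

namespace Con

variable [MeasurableSpace Ω] {P : Measure Ω} {D : ℕ → Finset (Set Ω)}

attribute [local instance] Classical.propDecidable

lemma disj (hpart : IsPartitionSeq D) {n : ℕ} {A B : Set Ω} (hA : A ∈ D n) (hB : B ∈ D n)
    (hne : A ≠ B) : A ∩ B = ∅ := by
  have h := hpart.2.2.1 n (Finset.mem_coe.mpr hA) (Finset.mem_coe.mpr hB) hne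
  simpa [Set.disjoint_iff_inter_eq_empty] using h

lemma atom_unique (hpart : IsPartitionSeq D) {n : ℕ} {A B : Set Ω} (hA : A ∈ D n)
    (hB : B ∈ D n) {S : Set Ω} (hS : S.Nonempty) (h1 : S ⊆ A) (h2 : S ⊆ B) : A = B := by
  by_contra hne
  obtain ⟨w, hw⟩ := hS
  have := disj hpart hA hB hne
  exact absurd (Set.mem_inter (h1 hw) (h2 hw)) (by simp [this])

lemma exists_anc (hpart : IsPartitionSeq D) {n m : ℕ} (h : n ≤ m) :
    ∀ {B : Set Ω}, B ∈ D m → ∃ A ∈ D n, B ⊆ A := by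
  induction m, h using Nat.le_induction with
  | base => exact fun hB => ⟨_, hB, subset_rfl⟩
  | succ m hm ih =>
      intro B hB
      obtain ⟨C, hC, hBC⟩ := hpart.2.2.2.2 m B hB
      obtain ⟨A, hA, hCA⟩ := ih hC
      exact ⟨A, hA, hBC.trans hCA⟩

lemma cover (hpart : IsPartitionSeq D) (n : ℕ) (w : Ω) : ∃ A ∈ D n, w ∈ A := by
  have := hpart.2.2.2.1 n
  have hw : w ∈ ⋃ A ∈ D n, A := by rw [this]; trivial
  simpa using hw

lemma subset_or_disjoint (hpart : IsPartitionSeq D) {n m : ℕ} (h : n ≤ m) {A B : Set Ω}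
    (hA : A ∈ D n) (hB : B ∈ D m) : B ⊆ A ∨ A ∩ B = ∅ := by
  obtain ⟨A', hA', hBA'⟩ := exists_anc hpart h hB
  by_cases he : A' = A
  · exact Or.inl (he ▸ hBA')
  · refine Or.inr ?_
    have hd := disj hpart hA' hA he
    apply Set.eq_empty_of_subset_empty
    intro w hw
    rw [← hd]; exact ⟨hBA' hw.2, hw.1⟩

lemma mem_of_between (hpart : IsPartitionSeq D) {n m k : ℕ} (hnm : n ≤ m) (hmk : m ≤ k)
    {A : Set Ω} (hA : A ∈ D n) (hAk : A ∈ D k) : A ∈ D m := by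
  obtain ⟨B, hB, hAB⟩ := exists_anc hpart hmk hAk
  obtain ⟨A'', hA'', hBA''⟩ := exists_anc hpart hnm hB
  have hAA : A = A'' :=
    atom_unique hpart hA hA'' (hpart.2.1 n A hA) subset_rfl (hAB.trans hBA'')
  have : B = A := subset_antisymm (hAA ▸ hBA'') hAB
  exact this ▸ hB

lemma biUnion_filter_eq (hpart : IsPartitionSeq D) {n m : ℕ} (h : n ≤ m) {A : Set Ω}
    (hA : A ∈ D n) : ⋃ B ∈ (D m).filter (fun B => B ⊆ A), B = A := by
  classical
  apply subset_antisymm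
  · simp only [Set.iUnion_subset_iff]
    intro B hB
    exact (Finset.mem_filter.mp hB).2
  · intro w hw
    obtain ⟨B, hB, hwB⟩ := cover hpart m w
    rcases subset_or_disjoint hpart h hA hB with hsub | hd
    · exact Set.mem_biUnion (Finset.mem_filter.mpr ⟨hB, hsub⟩) hwB
    · exact absurd (hd ▸ Set.mem_inter hw hwB : w ∈ (∅ : Set Ω)) (Set.notMem_empty w)

lemma measure_eq_sum_filter (hpart : IsPartitionSeq D) {n m : ℕ} (h : n ≤ m) {A : Set Ω}
    (hA : A ∈ D n) :
    P A = ∑ B ∈ (D m).filter (fun B => B ⊆ A), P B := by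
  classical
  conv_lhs => rw [← biUnion_filter_eq hpart h hA]
  rw [measure_biUnion_finset]
  · intro B hB C hC hne
    simp only [Finset.coe_filter, Set.mem_setOf_eq] at hB hC
    exact Set.disjoint_iff_inter_eq_empty.mpr (disj hpart hB.1 hC.1 hne)
  · exact fun B hB => hpart.1 m B (Finset.mem_filter.mp hB).1

end Con

namespace Con
variable [MeasurableSpace Ω] {P : Measure Ω} {D : ℕ → Finset (Set Ω)} {N : ℕ}
attribute [local instance] Classical.propDecidable
set_option linter.unusedSectionVars false
section
variable (D) in
def Lnext (j : ℕ) : ℕ := Classical.epsilon fun m => (∀ A ∈ D j, A ∉ D m) ∧ j < m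

variable (D N) in
def L : ℕ → ℕ := fun k => Nat.rec (N + 1) (fun _ prev => Lnext D prev) k

lemma lnext_ex (hpart : IsPartitionSeq D) (hAs : AssumptionA P D) (j : ℕ) :
    ∃ m, (∀ A ∈ D j, A ∉ D m) ∧ j < m := by
  classical
  set m0 := (D j).attach.sup (fun A => (hAs.2 j A.1 A.2).choose) with hm0
  refine ⟨max (j + 1) m0, fun A hA hmem => ?_, lt_of_lt_of_le (Nat.lt_succ_self j) (le_max_left _ _)⟩
  set mA := (hAs.2 j A hA).choose with hmA
  obtain ⟨h1, h2⟩ := (hAs.2 j A hA).choose_spec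
  have hle : mA ≤ max (j + 1) m0 := by
    refine le_trans ?_ (le_max_right _ _)
    exact Finset.le_sup (f := fun A : {x // x ∈ D j} => (hAs.2 j A.1 A.2).choose)
      (Finset.mem_attach _ ⟨A, hA⟩)
  exact h2 (mem_of_between hpart (le_of_lt h1) hle hA hmem)

lemma L_zero : L D N 0 = N + 1 := rfl

lemma L_succ (k : ℕ) : L D N (k + 1) = Lnext D (L D N k) := rfl

lemma L_spec (hpart : IsPartitionSeq D) (hAs : AssumptionA P D) (k : ℕ) :
    (∀ A ∈ D (L D N k), A ∉ D (L D N (k + 1))) ∧ L D N k < L D N (k + 1) := by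
  rw [L_succ]
  exact Classical.epsilon_spec (lnext_ex hpart hAs (L D N k))

lemma L_ge (hpart : IsPartitionSeq D) (hAs : AssumptionA P D) (k : ℕ) :
    k + N + 1 ≤ L D N k := by
  induction k with
  | zero => simp [L_zero]
  | succ k ih => have := (L_spec (P := P) (N := N) hpart hAs k).2; omega

lemma L_mono (hpart : IsPartitionSeq D) (hAs : AssumptionA P D) {k l : ℕ} (h : k ≤ l) :
    L D N k ≤ L D N l := by
  induction l, h using Nat.le_induction with
  | base => exact le_refl _
  | succ l hl ih => exact le_trans ih (le_of_lt (L_spec (P := P) (N := N) hpart hAs l).2)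

variable (D N) in
def childs (k : ℕ) (A : Set Ω) : Finset (Set Ω) :=
  (D (L D N (k + 1))).filter (fun B => B ⊆ A)

lemma childs_nonempty (hpart : IsPartitionSeq D) (hAs : AssumptionA P D) {k : ℕ} {A : Set Ω}
    (hA : A ∈ D (L D N k)) : (childs D N k A).Nonempty := by
  obtain ⟨w, hw⟩ := hpart.2.1 _ A hA
  obtain ⟨B, hB, hwB⟩ := cover hpart (L D N (k + 1)) w
  rcases subset_or_disjoint hpart (Nat.le_of_lt (L_spec (P := P) (N := N) hpart hAs k).2) hA hB with hs | hd
  · exact ⟨B, Finset.mem_filter.mpr ⟨hB, hs⟩⟩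
  · exact absurd (hd ▸ Set.mem_inter hw hwB : w ∈ (∅ : Set Ω)) (Set.notMem_empty w)
end
end Con


namespace Con
variable [MeasurableSpace Ω] {P : Measure Ω} {D : ℕ → Finset (Set Ω)} {N : ℕ}
attribute [local instance] Classical.propDecidable
set_option linter.unusedSectionVars false

section
variable [IsProbabilityMeasure P]

variable (P D N) in
def mchild (k : ℕ) (A : Set Ω) : Set Ω :=
  Classical.epsilon fun B => B ∈ childs D N k A ∧ ∀ B' ∈ childs D N k A, P B ≤ P B'

lemma childs_mem_level {k : ℕ} {A B : Set Ω} (hB : B ∈ childs D N k A) :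
    B ∈ D (L D N (k + 1)) := (Finset.mem_filter.mp hB).1

lemma childs_subset {k : ℕ} {A B : Set Ω} (hB : B ∈ childs D N k A) : B ⊆ A :=
  (Finset.mem_filter.mp hB).2

lemma mchild_spec (hpart : IsPartitionSeq D) (hAs : AssumptionA P D) {k : ℕ} {A : Set Ω}
    (hA : A ∈ D (L D N k)) :
    mchild P D N k A ∈ childs D N k A ∧ ∀ B' ∈ childs D N k A, P (mchild P D N k A) ≤ P B' := by
  have h := Finset.exists_min_image (childs D N k A) P (childs_nonempty hpart hAs hA)
  obtain ⟨B, hB, hmin⟩ := h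
  exact Classical.epsilon_spec (p := fun B => B ∈ childs D N k A ∧
    ∀ B' ∈ childs D N k A, P B ≤ P B') ⟨B, hB, hmin⟩

lemma exists_two_childs (hpart : IsPartitionSeq D) (hAs : AssumptionA P D) {k : ℕ} {A : Set Ω}
    (hA : A ∈ D (L D N k)) :
    ∃ B1 ∈ childs D N k A, ∃ B2 ∈ childs D N k A, B1 ≠ B2 := by
  by_contra h
  push_neg at h
  obtain ⟨B, hB⟩ := childs_nonempty hpart hAs hA
  have hAB : A = B := by
    apply subset_antisymm
    · intro w hw
      have hu := biUnion_filter_eq hpart (Nat.le_of_lt (L_spec (P := P) (N := N) hpart hAs k).2) hA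
      rw [← hu] at hw
      simp only [Set.mem_iUnion] at hw
      obtain ⟨B', hB', hwB'⟩ := hw
      rwa [h B' hB' B hB] at hwB'
    · exact childs_subset hB
  exact (L_spec (P := P) (N := N) hpart hAs k).1 A hA (hAB ▸ childs_mem_level hB)

lemma mchild_double_le (hpart : IsPartitionSeq D) (hAs : AssumptionA P D) {k : ℕ} {A : Set Ω}
    (hA : A ∈ D (L D N k)) :
    P (mchild P D N k A) + P (mchild P D N k A) ≤ P A := by
  obtain ⟨B1, h1, B2, h2, hne⟩ := exists_two_childs hpart hAs hA
  have hmin := (mchild_spec hpart hAs hA).2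
  calc P (mchild P D N k A) + P (mchild P D N k A) ≤ P B1 + P B2 :=
        add_le_add (hmin B1 h1) (hmin B2 h2)
    _ = ∑ B ∈ ({B1, B2} : Finset (Set Ω)), P B := (Finset.sum_pair hne).symm
    _ ≤ ∑ B ∈ childs D N k A, P B := by
        refine Finset.sum_le_sum_of_subset ?_
        intro x hx
        rcases Finset.mem_insert.mp hx with h | h
        · exact h ▸ h1
        · exact (Finset.mem_singleton.mp h) ▸ h2
    _ = P A := (measure_eq_sum_filter hpart
        (Nat.le_of_lt (L_spec (P := P) (N := N) hpart hAs k).2) hA).symm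

lemma mchild_half (hpart : IsPartitionSeq D) (hAs : AssumptionA P D) {k : ℕ} {A : Set Ω}
    (hA : A ∈ D (L D N k)) :
    P (mchild P D N k A) ≤ 2⁻¹ * P A := by
  have h := mchild_double_le hpart hAs hA
  have : P (mchild P D N k A) = 2⁻¹ * (P (mchild P D N k A) + P (mchild P D N k A)) := by
    rw [← two_mul, ← mul_assoc, ENNReal.inv_mul_cancel (by norm_num) (by norm_num), one_mul]
  rw [this]
  exact mul_le_mul_right h _

end

-- decode arithmetic
def IsBump (i : ℕ) : Prop := ∃ t k, i = 2 ^ (t + 2) * (2 * k + 1)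

def tb (i : ℕ) : ℕ := padicValNat 2 i - 2

omit [MeasurableSpace Ω] in
lemma tb_eq {t k : ℕ} : tb (2 ^ (t + 2) * (2 * k + 1)) = t := by
  unfold tb
  rw [padicValNat.mul (by positivity) (by omega), padicValNat.prime_pow,
    padicValNat.eq_zero_of_not_dvd (by omega)]
  omega

omit [MeasurableSpace Ω] in
lemma two_mul_le_pow (t : ℕ) : 2 * (t + 2) ≤ 2 ^ (t + 2) := by
  induction t with
  | zero => norm_num
  | succ t ih => rw [pow_succ]; omega

omit [MeasurableSpace Ω] in
lemma bump_facts {i : ℕ} (h : IsBump i) :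
    tb i + 1 < i ∧ i / 2 ≤ i - (tb i + 1) ∧ 2 * (tb i + 2) ≤ i := by
  obtain ⟨t, k, rfl⟩ := h
  rw [tb_eq]
  have h1 : 2 * (t + 2) ≤ 2 ^ (t + 2) := two_mul_le_pow t
  have h2 : 2 ^ (t + 2) ≤ 2 ^ (t + 2) * (2 * k + 1) := Nat.le_mul_of_pos_right _ (by omega)
  set i := 2 ^ (t + 2) * (2 * k + 1)
  have h3 : i / 2 * 2 ≤ i := Nat.div_mul_le_self i 2
  have h4 : t + 2 ≤ i / 2 := Nat.le_div_iff_mul_le (by norm_num) |>.mpr (by omega)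
  omega

-- requirements decoding
def reqm (t : ℕ) : ℕ := (Nat.unpair (Nat.unpair t).1).1
def reqc (t : ℕ) : ℕ := (Nat.unpair (Nat.unpair t).1).2

def sg (t : ℕ) : ℝ := if reqc t % 2 = 0 then 1 else -1

variable (D) in
def tgtAtom (t : ℕ) : Set Ω :=
  if h : reqm t ≤ t ∧ reqc t / 2 < (D (reqm t)).card then
    (D (reqm t)).toList.getD (reqc t / 2) ∅
  else Set.univ

omit [MeasurableSpace Ω] in
lemma sg_abs (t : ℕ) : |sg t| = 1 := by
  unfold sg; split <;> simp

omit [MeasurableSpace Ω] in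
lemma exists_target {m : ℕ} {B : Set Ω} (hB : B ∈ D m) (bit : ℕ) (hbit : bit ≤ 1) (n₀ : ℕ) :
    ∃ t, n₀ ≤ t ∧ m ≤ t ∧ tgtAtom D t = B ∧ sg t = (if bit = 0 then (1 : ℝ) else -1) := by
  classical
  set r := (D m).toList.idxOf B with hr
  have hrlt : r < (D m).toList.length := List.idxOf_lt_length_iff.mpr (Finset.mem_toList.mpr hB)
  set a := Nat.pair m (2 * r + bit) with ha
  refine ⟨Nat.pair a n₀, Nat.right_le_pair _ _, ?_, ?_, ?_⟩
  · exact le_trans (Nat.left_le_pair m _) (le_trans (by rw [ha]) (Nat.left_le_pair a n₀))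
  · have hm : reqm (Nat.pair a n₀) = m := by simp [reqm, ha]
    have hc : reqc (Nat.pair a n₀) = 2 * r + bit := by simp [reqc, ha]
    have hdiv : (2 * r + bit) / 2 = r := by omega
    rw [tgtAtom, dif_pos]
    · simp only [hm, hc, hdiv]
      rw [List.getD_eq_getElem _ _ hrlt]
      exact List.getElem_idxOf hrlt
    · constructor
      · rw [hm]; exact le_trans (Nat.left_le_pair m _) (Nat.left_le_pair a n₀)
      · rw [hm, hc, hdiv, ← Finset.length_toList]; exact hrlt
  · unfold sg
    have hc : reqc (Nat.pair a n₀) = 2 * r + bit := by simp [reqc, ha]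
    rw [hc]
    rcases Nat.le_one_iff_eq_zero_or_eq_one.mp hbit with rfl | rfl
    · simp [Nat.mul_mod_right]
    · norm_num [Nat.add_mod, Nat.mul_mod_right]

end Con


namespace Con
variable [MeasurableSpace Ω] {P : Measure Ω} {D : ℕ → Finset (Set Ω)} {N : ℕ}
attribute [local instance] Classical.propDecidable
set_option linter.unusedSectionVars false
variable [IsProbabilityMeasure P]

variable (D N) in
def tdesc (j : ℕ) : Set Ω :=
  Classical.epsilon fun A => A ∈ D (L D N j) ∧ A ⊆ tgtAtom D j

variable (P D N) in
def seedC (j : ℕ) (prev : ℕ → Set Ω) : Set Ω :=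
  Classical.epsilon fun B => B ∈ childs D N j (tdesc D N j) ∧
    ∀ t, t < j → B ≠ mchild P D N j (prev t)

variable (P D N) in
def ch : ℕ → ℕ → Set Ω :=
  Nat.rec (fun _ => ∅) (fun j prev t =>
    if t < j then mchild P D N j (prev t)
    else if t = j then seedC P D N j prev else ∅)

lemma ch_succ (j t : ℕ) : ch P D N (j + 1) t =
    if t < j then mchild P D N j (ch P D N j t)
    else if t = j then seedC P D N j (ch P D N j) else ∅ := rfl

lemma tdesc_spec [Nonempty Ω] (hpart : IsPartitionSeq D) (hAs : AssumptionA P D) (j : ℕ) :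
    tdesc D N j ∈ D (L D N j) ∧ tdesc D N j ⊆ tgtAtom D j := by
  refine Classical.epsilon_spec (p := fun A => A ∈ D (L D N j) ∧ A ⊆ tgtAtom D j) ?_
  unfold tgtAtom
  split
  · next h =>
    set m := reqm j
    set B : Set Ω := (D m).toList.getD (reqc j / 2) ∅ with hBdef
    have hBm : B ∈ D m := by
      rw [hBdef, List.getD_eq_getElem _ _ (by simpa [Finset.length_toList] using h.2)]
      exact Finset.mem_toList.mp (List.getElem_mem _)
    have hmL : m ≤ L D N j := le_trans h.1 (by have := L_ge (P := P) (N := N) hpart hAs j; omega)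
    obtain ⟨w, hw⟩ := hpart.2.1 m B hBm
    obtain ⟨A, hA, hwA⟩ := cover hpart (L D N j) w
    rcases subset_or_disjoint hpart hmL hBm hA with hs | hd
    · exact ⟨A, hA, hs⟩
    · exact absurd (hd ▸ Set.mem_inter hw hwA : w ∈ (∅ : Set Ω)) (Set.notMem_empty w)
  · obtain ⟨A, hA, _⟩ := cover hpart (L D N j) (Classical.arbitrary Ω)
    exact ⟨A, hA, Set.subset_univ A⟩

lemma ch_inv [Nonempty Ω] (hpart : IsPartitionSeq D) (hAs : AssumptionA P D) : ∀ j, ∀ t, t < j →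
    (ch P D N j t ∈ D (L D N j)) ∧ (P (ch P D N j t) ≤ 2⁻¹ ^ (j - (t + 1))) ∧
    (ch P D N j t ⊆ tgtAtom D t) ∧
    (∀ s, s < j → s ≠ t → ch P D N j s ≠ ch P D N j t) := by
  intro j
  induction j with
  | zero => omega
  | succ j ih =>
    -- seed spec at step j
    have htd := tdesc_spec (P := P) (N := N) hpart hAs j
    have hseed : seedC P D N j (ch P D N j) ∈ childs D N j (tdesc D N j) ∧
        ∀ t, t < j → seedC P D N j (ch P D N j) ≠ mchild P D N j (ch P D N j t) := by
      refine Classical.epsilon_spec (p := fun B => B ∈ childs D N j (tdesc D N j) ∧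
        ∀ t, t < j → B ≠ mchild P D N j (ch P D N j t)) ?_
      obtain ⟨B1, h1, B2, h2, hne⟩ := exists_two_childs hpart hAs htd.1
      by_cases hc1 : ∀ t, t < j → B1 ≠ mchild P D N j (ch P D N j t)
      · exact ⟨B1, h1, hc1⟩
      by_cases hc2 : ∀ t, t < j → B2 ≠ mchild P D N j (ch P D N j t)
      · exact ⟨B2, h2, hc2⟩
      push_neg at hc1 hc2
      obtain ⟨t1, ht1, he1⟩ := hc1
      obtain ⟨t2, ht2, he2⟩ := hc2
      have hm1 := (mchild_spec hpart hAs (ih t1 ht1).1).1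
      have hm2 := (mchild_spec hpart hAs (ih t2 ht2).1).1
      have hne1 : (mchild P D N j (ch P D N j t1)).Nonempty :=
        hpart.2.1 _ _ (childs_mem_level hm1)
      have heq1 : ch P D N j t1 = tdesc D N j := by
        refine atom_unique hpart (ih t1 ht1).1 htd.1 hne1 (childs_subset hm1) ?_
        rw [← he1]; exact childs_subset h1
      have hne2 : (mchild P D N j (ch P D N j t2)).Nonempty :=
        hpart.2.1 _ _ (childs_mem_level hm2)
      have heq2 : ch P D N j t2 = tdesc D N j := by
        refine atom_unique hpart (ih t2 ht2).1 htd.1 hne2 (childs_subset hm2) ?_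
        rw [← he2]; exact childs_subset h2
      by_cases hte : t1 = t2
      · exact absurd (by rw [he1, he2, hte]) hne
      · exact absurd (heq2.trans heq1.symm) ((ih t1 ht1).2.2.2 t2 ht2 (Ne.symm hte))
    intro t ht
    by_cases htj : t < j
    · have hmem := (ih t htj).1
      have hmc := (mchild_spec hpart hAs hmem).1
      have hmcm : mchild P D N j (ch P D N j t) ∈ D (L D N (j + 1)) := childs_mem_level hmc
      refine ⟨by rw [ch_succ, if_pos htj]; exact hmcm, ?_, ?_, ?_⟩
      · rw [ch_succ, if_pos htj]
        have hhalf := mchild_half hpart hAs hmem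
        have : (j + 1) - (t + 1) = (j - (t + 1)) + 1 := by omega
        rw [this, pow_succ]
        calc P (mchild P D N j (ch P D N j t)) ≤ 2⁻¹ * P (ch P D N j t) := hhalf
          _ ≤ 2⁻¹ * 2⁻¹ ^ (j - (t + 1)) := mul_le_mul_right (ih t htj).2.1 _
          _ = 2⁻¹ ^ (j - (t + 1)) * 2⁻¹ := mul_comm _ _
      · rw [ch_succ, if_pos htj]
        exact (childs_subset hmc).trans (ih t htj).2.2.1
      · intro s hs hst
        rw [ch_succ, ch_succ, if_pos htj]
        by_cases hsj : s < j
        · rw [if_pos hsj]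
          intro heq
          have hmcs := (mchild_spec hpart hAs (ih s hsj).1).1
          have hnes : (mchild P D N j (ch P D N j s)).Nonempty :=
            hpart.2.1 _ _ (childs_mem_level hmcs)
          have h2 : mchild P D N j (ch P D N j s) ⊆ ch P D N j t := by
            rw [heq]; exact childs_subset hmc
          exact (ih t htj).2.2.2 s hsj hst
            (atom_unique hpart (ih s hsj).1 (ih t htj).1 hnes (childs_subset hmcs) h2)
        · have hsje : s = j := by omega
          rw [if_neg hsj, if_pos hsje]
          exact hsje ▸ hseed.2 t htj
    · have htje : t = j := by omega
      have hmemseed : ch P D N (j + 1) t = seedC P D N j (ch P D N j) := by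
        rw [ch_succ, if_neg htj, if_pos htje]
      refine ⟨?_, ?_, ?_, ?_⟩
      · rw [hmemseed]; exact childs_mem_level hseed.1
      · have : (j + 1) - (t + 1) = 0 := by omega
        rw [this, pow_zero]
        exact prob_le_one
      · rw [hmemseed, htje]
        exact (childs_subset hseed.1).trans htd.2
      · intro s hs hst
        have hsj : s < j := by omega
        rw [hmemseed, ch_succ, if_pos hsj]
        exact fun heq => (hseed.2 s hsj) heq.symm

lemma ch_step_subset [Nonempty Ω] (hpart : IsPartitionSeq D) (hAs : AssumptionA P D)
    {j t : ℕ} (ht : t < j) : ch P D N (j + 1) t ⊆ ch P D N j t := by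
  rw [ch_succ, if_pos ht]
  exact childs_subset (mchild_spec hpart hAs (ch_inv hpart hAs j t ht).1).1

lemma ch_subset [Nonempty Ω] (hpart : IsPartitionSeq D) (hAs : AssumptionA P D)
    {j j' t : ℕ} (ht : t < j) (hj : j ≤ j') : ch P D N j' t ⊆ ch P D N j t := by
  induction j', hj using Nat.le_induction with
  | base => exact subset_rfl
  | succ j' hj ih => exact (ch_step_subset hpart hAs (by omega)).trans ih

lemma ch_nonempty [Nonempty Ω] (hpart : IsPartitionSeq D) (hAs : AssumptionA P D)
    {j t : ℕ} (ht : t < j) : (ch P D N j t).Nonempty :=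
  hpart.2.1 _ _ (ch_inv hpart hAs j t ht).1

end Con


namespace Con
variable [MeasurableSpace Ω] {P : Measure Ω} {D : ℕ → Finset (Set Ω)} {N : ℕ}
attribute [local instance] Classical.propDecidable
set_option linter.unusedSectionVars false
variable [IsProbabilityMeasure P]

variable (P D N) in
def bigA (i : ℕ) : Set Ω := ch P D N i (tb i)

variable (P D N) in
def mcA (i : ℕ) : Set Ω := mchild P D N i (bigA P D N i)

variable (P D N) in
def rho (i : ℕ) : ℝ :=
  (P (mcA P D N i)).toReal / ((P (bigA P D N i)).toReal - (P (mcA P D N i)).toReal)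

variable (P D N) in
def dd (i : ℕ) : Ω → ℝ :=
  if IsBump i then fun w =>
    sg (tb i) * ((mcA P D N i).indicator (fun _ => (1 : ℝ)) w
      - rho P D N i * ((bigA P D N i \ mcA P D N i).indicator (fun _ => (1 : ℝ)) w))
  else 0

variable (P D N) in
def G (n : ℕ) : Ω → ℝ := fun w => ∑ i ∈ Finset.range n, dd P D N i w

variable (P D N) in
def mart (n : ℕ) (A : Set Ω) : ℝ :=
  if A ∈ D n then (P A).toReal⁻¹ * ∫ w in A, G P D N n w ∂P else 0

section
variable [Nonempty Ω] (hpart : IsPartitionSeq D) (hAs : AssumptionA P D)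

include hpart hAs

lemma bigA_mem {i : ℕ} (hb : IsBump i) : bigA P D N i ∈ D (L D N i) :=
  (ch_inv hpart hAs i (tb i) (by have := (bump_facts hb).1; omega)).1

lemma mcA_childs {i : ℕ} (hb : IsBump i) : mcA P D N i ∈ childs D N i (bigA P D N i) :=
  (mchild_spec hpart hAs (bigA_mem hpart hAs hb)).1

lemma mcA_mem {i : ℕ} (hb : IsBump i) : mcA P D N i ∈ D (L D N (i + 1)) :=
  childs_mem_level (mcA_childs hpart hAs hb)

lemma mcA_subset {i : ℕ} (hb : IsBump i) : mcA P D N i ⊆ bigA P D N i :=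
  childs_subset (mcA_childs hpart hAs hb)

lemma mcA_eq_ch {i : ℕ} (hb : IsBump i) : mcA P D N i = ch P D N (i + 1) (tb i) := by
  rw [ch_succ, if_pos (by have := (bump_facts hb).1; omega)]
  rfl

lemma meas_facts {i : ℕ} (hb : IsBump i) :
    0 < (P (mcA P D N i)).toReal ∧
    (P (mcA P D N i)).toReal + (P (mcA P D N i)).toReal ≤ (P (bigA P D N i)).toReal := by
  constructor
  · exact ENNReal.toReal_pos (hAs.1 _ _ (mcA_mem hpart hAs hb)).ne' (measure_ne_top P _)
  · have h := mchild_double_le hpart hAs (bigA_mem (N := N) hpart hAs hb)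
    have := ENNReal.toReal_le_toReal (a := P (mcA P D N i) + P (mcA P D N i))
      (by finiteness) (measure_ne_top P _) |>.mpr h
    rwa [ENNReal.toReal_add (measure_ne_top P _) (measure_ne_top P _)] at this

lemma rho_spec {i : ℕ} (hb : IsBump i) :
    0 ≤ rho P D N i ∧ rho P D N i ≤ 1 ∧
    rho P D N i * ((P (bigA P D N i)).toReal - (P (mcA P D N i)).toReal)
      = (P (mcA P D N i)).toReal := by
  obtain ⟨ha, hab⟩ := meas_facts hpart hAs hb
  set a := (P (mcA P D N i)).toReal
  set b := (P (bigA P D N i)).toReal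
  have hba : 0 < b - a := by linarith
  have hrho : rho P D N i = a / (b - a) := rfl
  refine ⟨by rw [hrho]; exact div_nonneg ha.le hba.le, ?_, by rw [hrho]; exact div_mul_cancel₀ a hba.ne'⟩
  rw [hrho, div_le_one hba]
  linarith

omit hpart hAs in
lemma int_ind {A B : Set Ω} (hB : MeasurableSet B) (c : ℝ) :
    ∫ w in A, B.indicator (fun _ => c) w ∂P = c * (P (A ∩ B)).toReal := by
  rw [setIntegral_indicator hB, setIntegral_const, smul_eq_mul, mul_comm]
  rfl

omit hpart hAs in
lemma integrable_ind {B : Set Ω} (hB : MeasurableSet B) (c : ℝ) :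
    Integrable (B.indicator (fun _ => c)) P :=
  (integrable_const c).indicator hB

lemma integrable_dd (i : ℕ) : Integrable (dd P D N i) P := by
  unfold dd
  split
  · next hb =>
    apply Integrable.const_mul
    have h1 := integrable_ind (P := P) (hpart.1 _ _ (mcA_mem (N := N) hpart hAs hb)) (1 : ℝ)
    have h2 := integrable_ind (P := P) ((hpart.1 _ _ (bigA_mem (N := N) hpart hAs hb)).diff
        (hpart.1 _ _ (mcA_mem (N := N) hpart hAs hb))) (1 : ℝ)
    exact h1.sub (h2.const_mul _)
  · exact integrable_zero _ _ _

lemma dd_abs_le (i : ℕ) (w : Ω) : |dd P D N i w| ≤ 1 := by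
  unfold dd
  split
  · next hb =>
    obtain ⟨h0, h1, _⟩ := rho_spec hpart hAs hb
    have habs := sg_abs (tb i)
    rw [abs_mul, habs, one_mul]
    rw [abs_le]
    have hi1 := Set.indicator_le_self' (f := fun _ => (1:ℝ)) (s := mcA P D N i) (by intro x _; norm_num) w
    constructor <;>
    · simp only [Set.indicator_apply]
      split <;> split <;> simp <;> nlinarith
  · simp

lemma dd_zero_off (i : ℕ) {w : Ω} (hw : w ∉ bigA P D N i) (hb : IsBump i) :
    dd P D N i w = 0 := by
  rw [dd, if_pos hb]
  have h1 : w ∉ mcA P D N i := fun h => hw (mcA_subset hpart hAs hb h)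
  have h2 : w ∉ bigA P D N i \ mcA P D N i := fun h => hw h.1
  simp [Set.indicator_of_notMem, h1, h2]

/-- the integral of `dd i` over the bump atom, and over anything containing it, vanishes -/
lemma int_dd_zero {i n : ℕ} (hn : n ≤ L D N i) {A : Set Ω} (hA : A ∈ D n) :
    ∫ w in A, dd P D N i w ∂P = 0 := by
  by_cases hb : IsBump i
  · rcases subset_or_disjoint hpart hn hA (bigA_mem (N := N) hpart hAs hb) with hs | hd
    · -- bigA ⊆ A : compute
      have hmcm := hpart.1 _ _ (mcA_mem (N := N) hpart hAs hb)
      have hdm := (hpart.1 _ _ (bigA_mem (N := N) hpart hAs hb)).diff hmcm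
      have : ∀ w, dd P D N i w = sg (tb i) * ((mcA P D N i).indicator (fun _ => (1 : ℝ)) w
          - rho P D N i * ((bigA P D N i \ mcA P D N i).indicator (fun _ => (1 : ℝ)) w)) :=
        fun w => by rw [dd, if_pos hb]
      simp only [this]
      rw [integral_const_mul, integral_sub ((integrable_ind hmcm 1).restrict)
        (((integrable_ind hdm 1).const_mul _).restrict), integral_const_mul,
        int_ind hmcm, int_ind hdm]
      have he1 : A ∩ mcA P D N i = mcA P D N i :=
        Set.inter_eq_right.mpr ((mcA_subset hpart hAs hb).trans hs)
      have he2 : A ∩ (bigA P D N i \ mcA P D N i) = bigA P D N i \ mcA P D N i :=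
        Set.inter_eq_right.mpr (fun w hw => hs hw.1)
      rw [he1, he2]
      have hdiff : P (bigA P D N i \ mcA P D N i)
          = P (bigA P D N i) - P (mcA P D N i) :=
        measure_diff (mcA_subset hpart hAs hb) hmcm.nullMeasurableSet (measure_ne_top P _)
      have hle : P (mcA P D N i) ≤ P (bigA P D N i) :=
        measure_mono (mcA_subset hpart hAs hb)
      rw [hdiff, ENNReal.toReal_sub_of_le hle (measure_ne_top P _)]
      obtain ⟨_, _, hmul⟩ := rho_spec (N := N) hpart hAs hb
      linear_combination (-(sg (tb i))) * hmul
    · -- disjoint from the bump atom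
      have : ∀ w ∈ A, dd P D N i w = 0 := by
        intro w hw
        refine dd_zero_off hpart hAs i ?_ hb
        intro hwB
        exact absurd (hd ▸ Set.mem_inter hw hwB : w ∈ (∅ : Set Ω)) (Set.notMem_empty w)
      rw [setIntegral_congr_fun (hpart.1 n A hA) this]
      simp
  · rw [dd, if_neg hb]
    simp

lemma integrable_G (n : ℕ) : Integrable (G P D N n) P := by
  unfold G
  exact integrable_finset_sum _ (fun i _ => integrable_dd hpart hAs i)

lemma int_G_congr {n m : ℕ} (hnm : n ≤ m) {A : Set Ω} (hA : A ∈ D n) :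
    ∫ w in A, G P D N m w ∂P = ∫ w in A, G P D N n w ∂P := by
  have hsplit : ∀ w, G P D N m w = G P D N n w + ∑ i ∈ Finset.Ico n m, dd P D N i w := by
    intro w
    rw [G, G, Finset.range_eq_Ico, Finset.range_eq_Ico]
    exact (Finset.sum_Ico_consecutive (fun i => dd P D N i w) (Nat.zero_le n) hnm).symm
  simp only [hsplit]
  rw [integral_add ((integrable_G hpart hAs n).restrict)
    ((integrable_finset_sum _ (fun i _ => integrable_dd hpart hAs i)).restrict),
    integral_finset_sum _ (fun i _ => (integrable_dd hpart hAs i).restrict)]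
  have : ∀ i ∈ Finset.Ico n m, ∫ w in A, dd P D N i w ∂P = 0 := by
    intro i hi
    have hni : n ≤ i := (Finset.mem_Ico.mp hi).1
    refine int_dd_zero hpart hAs ?_ hA
    have := L_ge (P := P) (N := N) hpart hAs i
    omega
  rw [Finset.sum_congr rfl this]
  simp

lemma int_mval_eq {n m : ℕ} (hnm : n ≤ m) {A : Set Ω} (hA : A ∈ D n) :
    ∫ w in A, mval D (mart P D N) m w ∂P = ∫ w in A, G P D N m w ∂P := by
  unfold mval
  rw [integral_finset_sum _ (fun B hB => (integrable_ind (hpart.1 m B hB) _).restrict)]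
  have hterm : ∀ B ∈ D m, ∫ w in A, B.indicator (fun _ => mart P D N m B) w ∂P
      = if B ⊆ A then ∫ w in B, G P D N m w ∂P else 0 := by
    intro B hB
    rw [int_ind (hpart.1 m B hB)]
    rcases subset_or_disjoint hpart hnm hA hB with hs | hd
    · rw [if_pos hs]
      have : A ∩ B = B := Set.inter_eq_right.mpr hs
      rw [this, mart, if_pos hB]
      have hpos : (P B).toReal ≠ 0 :=
        (ENNReal.toReal_pos (hAs.1 m B hB).ne' (measure_ne_top P _)).ne'
      field_simp
    · by_cases hs : B ⊆ A
      · rw [if_pos hs]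
        have hBe : B = ∅ := by
          have := Set.inter_eq_right.mpr hs
          rw [hd] at this; exact this.symm
        exact absurd (hBe ▸ hpart.2.1 m B hB) (by simp)
      · rw [if_neg hs, hd]
        simp
  rw [Finset.sum_congr rfl hterm, Finset.sum_ite, Finset.sum_const, smul_zero, add_zero]
  rw [← integral_biUnion_finset ((D m).filter (fun B => B ⊆ A))
    (fun B hB => hpart.1 m B (Finset.mem_filter.mp hB).1)
    ?_ (fun B hB => ((integrable_G hpart hAs m).restrict :
      IntegrableOn (G P D N m) B P))]
  · rw [biUnion_filter_eq hpart hnm hA]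
  · intro B hB C hC hne
    simp only [Finset.coe_filter, Set.mem_setOf_eq] at hB hC
    exact Set.disjoint_iff_inter_eq_empty.mpr (disj hpart hB.1 hC.1 hne)

lemma isMart_mart : IsMart P D (mart P D N) := by
  constructor
  · intro n A hA
    rw [mart, if_neg hA]
  · intro n m hnm A hA
    rw [int_mval_eq hpart hAs (le_refl n) hA, int_mval_eq hpart hAs hnm hA,
      int_G_congr hpart hAs hnm hA]

lemma mart_zero_le_N {n : ℕ} (hn : n ≤ N) (A : Set Ω) : mart P D N n A = 0 := by
  rw [mart]
  split
  · next hA =>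
    have : ∫ w in A, G P D N n w ∂P = 0 := by
      unfold G
      rw [integral_finset_sum _ (fun i _ => (integrable_dd hpart hAs i).restrict)]
      refine Finset.sum_eq_zero (fun i _ => ?_)
      refine int_dd_zero hpart hAs ?_ hA
      have := L_ge (P := P) (N := N) hpart hAs i
      omega
    rw [this, mul_zero]
  · rfl

end
end Con


namespace Con
variable [MeasurableSpace Ω] {P : Measure Ω} {D : ℕ → Finset (Set Ω)} {N : ℕ}
attribute [local instance] Classical.propDecidable
set_option linter.unusedSectionVars false
variable [IsProbabilityMeasure P]

variable (P D N) in
def ee (n i : ℕ) : Ω → ℝ := fun w =>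
  ∑ A ∈ D n, A.indicator (fun _ => (P A).toReal⁻¹ * ∫ v in A, dd P D N i v ∂P) w

section
variable [Nonempty Ω] (hpart : IsPartitionSeq D) (hAs : AssumptionA P D)
include hpart hAs

lemma measurable_ee (n i : ℕ) : Measurable (ee P D N n i) := by
  apply Finset.measurable_sum
  intro A hA
  exact measurable_const.indicator (hpart.1 n A hA)

lemma mval_eq_sum_ee (n : ℕ) :
    mval D (mart P D N) n = fun w => ∑ i ∈ Finset.range n, ee P D N n i w := by
  funext w
  rw [mval]
  simp only [ee]
  rw [Finset.sum_comm (s := Finset.range n) (t := D n)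
    (f := fun i A => A.indicator (fun _ => (P A).toReal⁻¹ * ∫ v in A, dd P D N i v ∂P) w)]
  refine Finset.sum_congr rfl (fun A hA => ?_)
  by_cases hw : w ∈ A
  · rw [Set.indicator_of_mem hw]
    have hG : ∫ v in A, G P D N n v ∂P = ∑ i ∈ Finset.range n, ∫ v in A, dd P D N i v ∂P := by
      simp only [G]
      exact integral_finset_sum _ (fun i _ => (integrable_dd hpart hAs i).restrict)
    rw [mart, if_pos hA, hG, Finset.mul_sum]
    refine Finset.sum_congr rfl (fun i _ => ?_)
    rw [Set.indicator_of_mem hw]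
  · simp only [Set.indicator_of_notMem hw]
    simp

lemma ee_zero_of_not_bump (n i : ℕ) (hb : ¬IsBump i) : ee P D N n i = fun _ => 0 := by
  funext w
  rw [ee]
  refine Finset.sum_eq_zero (fun A hA => ?_)
  have : dd P D N i = 0 := by rw [dd, if_neg hb]
  simp [this]

lemma ee_abs_le (n i : ℕ) (hb : IsBump i) (w : Ω) :
    ‖ee P D N n i w‖ ≤ ‖(bigA P D N i).indicator (fun _ => (1 : ℝ)) w‖ := by
  obtain ⟨A₀, hA₀, hwA₀⟩ := cover hpart n w
  have hee : ee P D N n i w = (P A₀).toReal⁻¹ * ∫ v in A₀, dd P D N i v ∂P := by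
    rw [ee]
    rw [Finset.sum_eq_single A₀]
    · rw [Set.indicator_of_mem hwA₀]
    · intro B hB hne
      refine Set.indicator_of_notMem (fun hwB => ?_) _
      exact absurd ((disj hpart hB hA₀ hne) ▸ Set.mem_inter hwB hwA₀ : w ∈ (∅ : Set Ω))
        (Set.notMem_empty w)
    · intro h; exact absurd hA₀ h
  by_cases hn : n ≤ L D N i
  · rw [hee, int_dd_zero hpart hAs hn hA₀]
    simp only [mul_zero, norm_zero]
    exact norm_nonneg _
  · push_neg at hn
    rcases subset_or_disjoint hpart (le_of_lt hn) (bigA_mem (N := N) hpart hAs hb) hA₀ with hs | hd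
    · -- A₀ ⊆ bigA i, w ∈ bigA i
      have hwB : w ∈ bigA P D N i := hs hwA₀
      rw [Set.indicator_of_mem hwB, norm_one, hee]
      have hfin : P A₀ < ∞ := measure_lt_top P A₀
      have hnorm : ‖∫ v in A₀, dd P D N i v ∂P‖ ≤ 1 * (P A₀).toReal := by
        refine norm_setIntegral_le_of_norm_le_const hfin ?_
        intro x _
        rw [Real.norm_eq_abs]
        exact dd_abs_le hpart hAs i x
      rw [one_mul] at hnorm
      have hpos : 0 < (P A₀).toReal :=
        ENNReal.toReal_pos (hAs.1 n A₀ hA₀).ne' (measure_ne_top P _)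
      rw [norm_mul, Real.norm_eq_abs, Real.norm_eq_abs, abs_of_nonneg (by positivity)]
      calc (P A₀).toReal⁻¹ * |∫ v in A₀, dd P D N i v ∂P|
          ≤ (P A₀).toReal⁻¹ * (P A₀).toReal := by
            refine mul_le_mul_of_nonneg_left ?_ (by positivity)
            rw [← Real.norm_eq_abs]; exact hnorm
        _ = 1 := inv_mul_cancel₀ hpos.ne'
    · -- A₀ disjoint from bigA i
      have : ∀ v ∈ A₀, dd P D N i v = 0 := by
        intro v hv
        refine dd_zero_off hpart hAs i (fun hvB => ?_) hb
        exact absurd (hd ▸ Set.mem_inter hvB hv : v ∈ (∅ : Set Ω)) (Set.notMem_empty v)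
      rw [hee, setIntegral_congr_fun (hpart.1 n A₀ hA₀) this]
      simp only [integral_zero, mul_zero, norm_zero]
      exact norm_nonneg _

lemma measure_bigA_le {i : ℕ} (hb : IsBump i) :
    P (bigA P D N i) ≤ 2⁻¹ ^ (i / 2) := by
  obtain ⟨h1, h2, h3⟩ := bump_facts hb
  have hm := (ch_inv (N := N) hpart hAs i (tb i) (by omega)).2.1
  refine le_trans hm ?_
  exact pow_le_pow_of_le_one (by positivity) (ENNReal.inv_le_one.mpr one_le_two) h2

lemma eLpNorm_ee_le {p : ℝ≥0∞} (hp1 : 1 ≤ p) (hp2 : p ≠ ∞) (n i : ℕ) :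
    eLpNorm (ee P D N n i) p P ≤ ((2 : ℝ≥0∞)⁻¹ ^ (i / 2)) ^ (1 / p.toReal) := by
  by_cases hb : IsBump i
  · calc eLpNorm (ee P D N n i) p P
        ≤ eLpNorm ((bigA P D N i).indicator (fun _ => (1 : ℝ))) p P :=
          eLpNorm_mono (ee_abs_le hpart hAs n i hb)
      _ = ‖(1 : ℝ)‖₊ * P (bigA P D N i) ^ (1 / p.toReal) := by
          rw [eLpNorm_indicator_const (hpart.1 _ _ (bigA_mem (N := N) hpart hAs hb))
            (by intro h; rw [h] at hp1; exact absurd hp1 (by simp)) hp2, enorm_eq_nnnorm]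
      _ ≤ ((2 : ℝ≥0∞)⁻¹ ^ (i / 2)) ^ (1 / p.toReal) := by
          simp only [nnnorm_one, ENNReal.coe_one, one_mul]
          exact ENNReal.rpow_le_rpow (measure_bigA_le hpart hAs hb)
            (by positivity)
  · rw [ee_zero_of_not_bump hpart hAs n i hb]
    simp [eLpNorm_zero']
end

omit [MeasurableSpace Ω] [IsProbabilityMeasure P] in
lemma tsum_bound {s : ℝ} (hs : 0 < s) :
    (∑' i : ℕ, ((2 : ℝ≥0∞)⁻¹ ^ (i / 2)) ^ s) ≠ ∞ := by
  set q : ℝ≥0∞ := 2⁻¹ ^ s with hq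
  have hq0 : q ≠ 0 := by
    rw [hq]
    exact (ENNReal.rpow_pos (by norm_num) (by norm_num)).ne'
  have hqt : q ≠ ∞ := by
    rw [hq]
    exact ENNReal.rpow_ne_top_of_nonneg hs.le (by norm_num)
  have hq1 : q < 1 := by
    rw [hq]
    exact ENNReal.rpow_lt_one (by norm_num) hs
  set r : ℝ≥0∞ := q ^ ((1 : ℝ) / 2) with hr
  have hr1 : r < 1 := ENNReal.rpow_lt_one hq1 (by norm_num)
  have hterm : ∀ i : ℕ, ((2 : ℝ≥0∞)⁻¹ ^ (i / 2)) ^ s ≤ q⁻¹ * r ^ i := by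
    intro i
    have e1 : ((2 : ℝ≥0∞)⁻¹ ^ (i / 2 : ℕ)) ^ s = q ^ ((i / 2 : ℕ) : ℝ) := by
      rw [← ENNReal.rpow_natCast (2 : ℝ≥0∞)⁻¹ (i / 2), ← ENNReal.rpow_mul, mul_comm,
        ENNReal.rpow_mul, hq]
    rw [e1]
    have e2 : q ^ ((i / 2 : ℕ) : ℝ) ≤ q ^ ((i : ℝ) / 2 - 1) := by
      refine ENNReal.rpow_le_rpow_of_exponent_ge hq1.le ?_
      have : (i / 2 : ℕ) ≥ (i - 1) / 2 := by omega
      have hnat : i ≤ 2 * (i / 2) + 1 := by omega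
      have h2 : ((i : ℝ)) ≤ 2 * ((i / 2 : ℕ) : ℝ) + 1 := by exact_mod_cast hnat
      linarith
    refine le_trans e2 ?_
    rw [show (i : ℝ) / 2 - 1 = (-1) + (i : ℝ) * (1 / 2) by ring, ENNReal.rpow_add _ _ hq0 hqt]
    gcongr
    · rw [ENNReal.rpow_neg, ENNReal.rpow_one]
    · rw [mul_comm, ENNReal.rpow_mul, ← hr, ENNReal.rpow_natCast]
  refine ne_top_of_le_ne_top ?_ (ENNReal.tsum_le_tsum hterm)
  rw [ENNReal.tsum_mul_left, ENNReal.tsum_geometric]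
  refine ENNReal.mul_ne_top (ENNReal.inv_ne_top.mpr hq0) ?_
  refine ENNReal.inv_ne_top.mpr ?_
  rw [ne_eq, tsub_eq_zero_iff_le]
  exact fun h => absurd (lt_of_le_of_lt h hr1) (lt_irrefl 1)

lemma martNorm_ne_top [Nonempty Ω] (hpart : IsPartitionSeq D) (hAs : AssumptionA P D)
    {p : ℝ≥0∞} (hp1 : 1 ≤ p) (hp2 : p ≠ ∞) : martNorm P D p (mart P D N) ≠ ∞ := by
  have hs : 0 < 1 / p.toReal := by
    have : 0 < p.toReal := ENNReal.toReal_pos (by intro h; rw [h] at hp1; simpa using hp1) hp2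
    positivity
  refine ne_top_of_le_ne_top (tsum_bound hs) ?_
  rw [martNorm]
  refine iSup_le (fun n => ?_)
  rw [lpNorm, mval_eq_sum_ee hpart hAs n]
  calc eLpNorm (fun w => ∑ i ∈ Finset.range n, ee P D N n i w) p P
      = eLpNorm (∑ i ∈ Finset.range n, ee P D N n i) p P := by
        congr 1
        funext w
        simp [Finset.sum_apply]
    _ ≤ ∑ i ∈ Finset.range n, eLpNorm (ee P D N n i) p P :=
        eLpNorm_sum_le (fun i _ => (measurable_ee hpart hAs n i).aestronglyMeasurable) hp1
    _ ≤ ∑ i ∈ Finset.range n, ((2 : ℝ≥0∞)⁻¹ ^ (i / 2)) ^ (1 / p.toReal) :=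
        Finset.sum_le_sum (fun i _ => eLpNorm_ee_le hpart hAs hp1 hp2 n i)
    _ ≤ ∑' i : ℕ, ((2 : ℝ≥0∞)⁻¹ ^ (i / 2)) ^ (1 / p.toReal) := ENNReal.sum_le_tsum _

end Con


namespace Con
variable [MeasurableSpace Ω] {P : Measure Ω} {D : ℕ → Finset (Set Ω)} {N : ℕ}
attribute [local instance] Classical.propDecidable
set_option linter.unusedSectionVars false
variable [IsProbabilityMeasure P]

variable (D) in
def anc (n : ℕ) (S : Set Ω) : Set Ω := Classical.epsilon fun A => A ∈ D n ∧ S ⊆ A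

variable (P D N) in
def xc (t n : ℕ) : Set Ω := anc D n (ch P D N (max (t + 1) n) t)

section
variable [Nonempty Ω] (hpart : IsPartitionSeq D) (hAs : AssumptionA P D)
include hpart hAs

lemma xc_spec (t n : ℕ) : xc P D N t n ∈ D n ∧ ch P D N (max (t + 1) n) t ⊆ xc P D N t n := by
  refine Classical.epsilon_spec
    (p := fun A => A ∈ D n ∧ ch P D N (max (t + 1) n) t ⊆ A) ?_
  have ht : t < max (t + 1) n := lt_of_lt_of_le (Nat.lt_succ_self t) (le_max_left _ _)
  have hmem := (ch_inv (N := N) hpart hAs (max (t + 1) n) t ht).1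
  have hn : n ≤ L D N (max (t + 1) n) := by
    have := L_ge (P := P) (N := N) hpart hAs (max (t + 1) n)
    have := le_max_right (t + 1) n
    omega
  exact exists_anc hpart hn hmem

lemma xc_eq (t n j : ℕ) (hj : max (t + 1) n ≤ j) {A : Set Ω} (hA : A ∈ D n)
    (hsub : ch P D N j t ⊆ A) : A = xc P D N t n := by
  have ht : t < max (t + 1) n := lt_of_lt_of_le (Nat.lt_succ_self t) (le_max_left _ _)
  have hne : (ch P D N j t).Nonempty := ch_nonempty hpart hAs (by omega)
  refine atom_unique hpart hA (xc_spec hpart hAs t n).1 hne hsub ?_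
  exact (ch_subset hpart hAs ht hj).trans (xc_spec hpart hAs t n).2

lemma xc_antitone (t : ℕ) {n m : ℕ} (hnm : n ≤ m) : xc P D N t m ⊆ xc P D N t n := by
  obtain ⟨A, hA, hsub⟩ := exists_anc hpart hnm (xc_spec hpart hAs t m).1
  have : A = xc P D N t n := by
    refine xc_eq hpart hAs t n (max (t + 1) m) (by omega) hA ?_
    exact (xc_spec hpart hAs t m).2.trans hsub
  exact this ▸ hsub

lemma xc_subset_ch {t i n : ℕ} (ht : t < i) (hLn : L D N i ≤ n) :
    xc P D N t n ⊆ ch P D N i t := by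
  obtain ⟨Y, hY, hxcY⟩ := exists_anc hpart hLn (xc_spec hpart hAs t n).1
  have hin : i ≤ max (t + 1) n := by
    have := L_ge (P := P) (N := N) hpart hAs i
    have := le_max_right (t + 1) n
    omega
  have hne : (ch P D N (max (t + 1) n) t).Nonempty :=
    ch_nonempty hpart hAs (lt_of_lt_of_le (Nat.lt_succ_self t) (le_max_left _ _))
  have hYe : Y = ch P D N i t := by
    refine atom_unique hpart hY (ch_inv (N := N) hpart hAs i t ht).1 hne
      ((xc_spec hpart hAs t n).2.trans hxcY) (ch_subset hpart hAs ?_ hin)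
    exact ht
  exact hYe ▸ hxcY

omit hpart hAs in
lemma int_dd_eq {i : ℕ} (hb : IsBump i) {A : Set Ω} (hmc : MeasurableSet (mcA P D N i))
    (hbigm : MeasurableSet (bigA P D N i)) :
    ∫ w in A, dd P D N i w ∂P = sg (tb i) * ((P (A ∩ mcA P D N i)).toReal
      - rho P D N i * (P (A ∩ (bigA P D N i \ mcA P D N i))).toReal) := by
  have hd : ∀ w, dd P D N i w = sg (tb i) * ((mcA P D N i).indicator (fun _ => (1 : ℝ)) w
      - rho P D N i * ((bigA P D N i \ mcA P D N i).indicator (fun _ => (1 : ℝ)) w)) :=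
    fun w => by rw [dd, if_pos hb]
  simp only [hd]
  rw [integral_const_mul, integral_sub ((integrable_ind hmc 1).restrict)
    (((integrable_ind (hbigm.diff hmc) 1).const_mul _).restrict), integral_const_mul,
    int_ind hmc, int_ind (hbigm.diff hmc), one_mul, one_mul]

lemma mart_expand {n : ℕ} {A : Set Ω} (hA : A ∈ D n) :
    mart P D N n A = ∑ i ∈ Finset.range n, (P A).toReal⁻¹ * ∫ w in A, dd P D N i w ∂P := by
  rw [mart, if_pos hA]
  have hG : ∫ v in A, G P D N n v ∂P = ∑ i ∈ Finset.range n, ∫ v in A, dd P D N i v ∂P := by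
    simp only [G]
    exact integral_finset_sum _ (fun i _ => (integrable_dd hpart hAs i).restrict)
  rw [hG, Finset.mul_sum]

variable (P D N) in
def goodF (t n : ℕ) : Finset ℕ :=
  (Finset.range n).filter (fun i => IsBump i ∧ tb i = t ∧ L D N (i + 1) ≤ n ∧ t + 1 ≤ i)

omit hpart hAs in
lemma sg_sq (t : ℕ) : sg t * sg t = 1 := by
  rw [sg]; split <;> norm_num

lemma key_est (t n : ℕ) :
    ((goodF D N t n).card : ℝ) - (t + 1) ≤ sg t * mart P D N n (xc P D N t n) := by
  set A₀ := xc P D N t n with hA₀def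
  have hA₀ : A₀ ∈ D n := (xc_spec hpart hAs t n).1
  have hu : 0 < (P A₀).toReal := ENNReal.toReal_pos (hAs.1 n A₀ hA₀).ne' (measure_ne_top P _)
  rw [mart_expand hpart hAs hA₀, Finset.mul_sum]
  have hterm : ∀ i ∈ Finset.range n,
      (if i ∈ goodF D N t n then (1 : ℝ) else 0) - (if i < t + 1 then 1 else 0)
      ≤ sg t * ((P A₀).toReal⁻¹ * ∫ w in A₀, dd P D N i w ∂P) := by
    intro i hi
    rw [Finset.mem_range] at hi
    by_cases hit : i < t + 1
    · -- crude bound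
      have hnotg : i ∉ goodF D N t n := by
        intro hg
        have := (Finset.mem_filter.mp hg).2.2.2.2
        omega
      rw [if_neg hnotg, if_pos hit]
      have habs : |sg t * ((P A₀).toReal⁻¹ * ∫ w in A₀, dd P D N i w ∂P)| ≤ 1 := by
        rw [abs_mul, sg_abs, one_mul, abs_mul, abs_of_nonneg (by positivity)]
        have hnorm : ‖∫ w in A₀, dd P D N i w ∂P‖ ≤ 1 * (P A₀).toReal := by
          refine norm_setIntegral_le_of_norm_le_const (measure_lt_top P A₀) ?_
          intro x _
          rw [Real.norm_eq_abs]
          exact dd_abs_le hpart hAs i x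
        rw [one_mul, Real.norm_eq_abs] at hnorm
        calc (P A₀).toReal⁻¹ * |∫ w in A₀, dd P D N i w ∂P|
            ≤ (P A₀).toReal⁻¹ * (P A₀).toReal := by gcongr
          _ = 1 := inv_mul_cancel₀ hu.ne'
      have := neg_abs_le (sg t * ((P A₀).toReal⁻¹ * ∫ w in A₀, dd P D N i w ∂P))
      linarith [habs, this]
    · push_neg at hit
      rw [if_neg (show ¬ i < t + 1 by omega)]
      by_cases hb : IsBump i
      · by_cases hnL : n ≤ L D N i
        · rw [int_dd_zero hpart hAs hnL hA₀]
          have hnotg : i ∉ goodF D N t n := by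
            intro hg
            have h2 := (Finset.mem_filter.mp hg).2.2.2.1
            have := (L_spec (P := P) (N := N) hpart hAs i).2
            omega
          rw [if_neg hnotg]
          simp
        · push_neg at hnL
          have hmcm := hpart.1 _ _ (mcA_mem (N := N) hpart hAs hb)
          have hbigm := hpart.1 _ _ (bigA_mem (N := N) hpart hAs hb)
          have hti : t < i := by omega
          have hsub : A₀ ⊆ ch P D N i t := xc_subset_ch hpart hAs hti hnL.le
          by_cases htt : tb i = t
          · -- own bump
            have hbigA : bigA P D N i = ch P D N i t := by rw [bigA, htt]
            by_cases hgood : L D N (i + 1) ≤ n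
            · -- A₀ ⊆ mcA i : full bump value
              have hsubmc : A₀ ⊆ mcA P D N i := by
                rw [mcA_eq_ch hpart hAs hb, htt]
                exact xc_subset_ch hpart hAs (show t < i + 1 by omega) hgood
              have hgmem : i ∈ goodF D N t n :=
                Finset.mem_filter.mpr ⟨Finset.mem_range.mpr hi, hb, htt, hgood, hit⟩
              rw [if_pos hgmem]
              rw [int_dd_eq hb hmcm hbigm, htt]
              have he1 : A₀ ∩ mcA P D N i = A₀ := Set.inter_eq_left.mpr hsubmc
              have he2 : A₀ ∩ (bigA P D N i \ mcA P D N i) = ∅ := by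
                apply Set.eq_empty_of_subset_empty
                intro v hv
                exact absurd (hsubmc hv.1) hv.2.2
              rw [he1, he2]
              simp only [measure_empty, ENNReal.toReal_zero, mul_zero, sub_zero]
              rw [show sg t * ((P A₀).toReal⁻¹ * (sg t * (P A₀).toReal))
                  = (sg t * sg t) * ((P A₀).toReal⁻¹ * (P A₀).toReal) by ring,
                sg_sq, inv_mul_cancel₀ hu.ne', one_mul]
            · -- intermediate : nonnegative contribution
              push_neg at hgood
              have hnotg : i ∉ goodF D N t n := by
                intro hg
                have := (Finset.mem_filter.mp hg).2.2.2.1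
                omega
              rw [if_neg hnotg]
              have hsubmc : mcA P D N i ⊆ A₀ := by
                obtain ⟨A', hA', hsub'⟩ := exists_anc hpart hgood.le
                  (mcA_mem (N := N) hpart hAs hb)
                have hin1 : i + 1 ≤ max (t + 1) n := by
                  have := L_ge (P := P) (N := N) hpart hAs i
                  have := le_max_right (t + 1) n
                  omega
                have h1 : ch P D N (max (t + 1) n) t ⊆ mcA P D N i := by
                  rw [mcA_eq_ch hpart hAs hb, htt]
                  exact ch_subset hpart hAs (show t < i + 1 by omega) hin1
                have hAe : A' = A₀ := by
                  refine atom_unique hpart hA' hA₀ ?_ (h1.trans hsub') (xc_spec hpart hAs t n).2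
                  exact ch_nonempty hpart hAs (lt_of_lt_of_le (Nat.lt_succ_self t) (le_max_left _ _))
                exact hAe ▸ hsub'
              have hsubbig : A₀ ⊆ bigA P D N i := hbigA ▸ hsub
              rw [int_dd_eq hb hmcm hbigm, htt]
              have he1 : A₀ ∩ mcA P D N i = mcA P D N i := Set.inter_eq_right.mpr hsubmc
              have he2 : A₀ ∩ (bigA P D N i \ mcA P D N i) = A₀ \ mcA P D N i := by
                ext v
                constructor
                · rintro ⟨hv, _, hnm⟩; exact ⟨hv, hnm⟩
                · rintro ⟨hv, hnm⟩; exact ⟨hv, hsubbig hv, hnm⟩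
              rw [he1, he2]
              have hdiffm : P (A₀ \ mcA P D N i) = P A₀ - P (mcA P D N i) :=
                measure_diff hsubmc hmcm.nullMeasurableSet (measure_ne_top P _)
              rw [hdiffm, ENNReal.toReal_sub_of_le (measure_mono hsubmc) (measure_ne_top P _)]
              set a := (P (mcA P D N i)).toReal
              set u := (P A₀).toReal
              set b := (P (bigA P D N i)).toReal
              obtain ⟨hrho0, hrho1, hrhomul⟩ := rho_spec (N := N) hpart hAs hb
              have hab : a + a ≤ b := (meas_facts (N := N) hpart hAs hb).2
              have ha : 0 < a := (meas_facts (N := N) hpart hAs hb).1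
              have hub : u ≤ b := by
                refine ENNReal.toReal_le_toReal (measure_ne_top P _) (measure_ne_top P _) |>.mpr ?_
                exact measure_mono hsubbig
              have hau : a ≤ u := by
                refine ENNReal.toReal_le_toReal (measure_ne_top P _) (measure_ne_top P _) |>.mpr ?_
                exact measure_mono hsubmc
              have hkey : 0 ≤ a - rho P D N i * (u - a) := by
                have h1 : rho P D N i * (u - a) ≤ rho P D N i * (b - a) := by
                  refine mul_le_mul_of_nonneg_left ?_ hrho0
                  linarith
                rw [hrhomul] at h1
                linarith
              rw [show sg t * ((P A₀).toReal⁻¹ * (sg t * (a - rho P D N i * (u - a))))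
                  = (sg t * sg t) * ((P A₀).toReal⁻¹ * (a - rho P D N i * (u - a))) by ring,
                sg_sq, one_mul]
              have hnn := mul_nonneg (inv_nonneg.mpr hu.le) hkey
              linarith
          · -- other mission's bump : zero on A₀
            have hnotg : i ∉ goodF D N t n := by
              intro hg
              exact htt (Finset.mem_filter.mp hg).2.2.1
            rw [if_neg hnotg]
            have hdisj : A₀ ∩ bigA P D N i = ∅ := by
              have hne := (ch_inv (N := N) hpart hAs i (tb i)
                (by have := (bump_facts hb).1; omega)).2.2.2 t hti (fun h => htt h.symm)
              have hd := disj hpart (ch_inv (N := N) hpart hAs i t hti).1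
                (ch_inv (N := N) hpart hAs i (tb i)
                  (by have := (bump_facts hb).1; omega)).1 hne
              apply Set.eq_empty_of_subset_empty
              intro v hv
              rw [← hd]
              exact ⟨hsub hv.1, hv.2⟩
            have hzero : ∀ v ∈ A₀, dd P D N i v = 0 := by
              intro v hv
              refine dd_zero_off hpart hAs i (fun hvB => ?_) hb
              exact absurd (hdisj ▸ Set.mem_inter hv hvB : v ∈ (∅ : Set Ω))
                (Set.notMem_empty v)
            rw [setIntegral_congr_fun (hpart.1 n A₀ hA₀) hzero]
            simp
      · -- not a bump step
        rw [if_neg (fun hg => hb (Finset.mem_filter.mp hg).2.1)]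
        have : dd P D N i = 0 := by rw [dd, if_neg hb]
        rw [this]
        simp
  have hsum := Finset.sum_le_sum hterm
  refine le_trans ?_ hsum
  rw [Finset.sum_sub_distrib]
  have h1 : ∑ i ∈ Finset.range n, (if i ∈ goodF D N t n then (1 : ℝ) else 0)
      = (goodF D N t n).card := by
    rw [Finset.sum_ite_mem]
    have : Finset.range n ∩ goodF D N t n = goodF D N t n :=
      Finset.inter_eq_right.mpr (Finset.filter_subset _ _)
    rw [this, Finset.sum_const, nsmul_eq_mul, mul_one]
  have h2 : ∑ i ∈ Finset.range n, (if i < t + 1 then (1 : ℝ) else 0) ≤ t + 1 := by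
    calc ∑ i ∈ Finset.range n, (if i < t + 1 then (1 : ℝ) else 0)
        ≤ ∑ i ∈ Finset.range n, (if i ∈ Finset.range (t + 1) then (1 : ℝ) else 0) := by
          refine Finset.sum_le_sum (fun i _ => ?_)
          simp [Finset.mem_range]
        _ = ((Finset.range n ∩ Finset.range (t + 1)).card : ℝ) := by
          rw [Finset.sum_ite_mem, Finset.sum_const, nsmul_eq_mul, mul_one]
        _ ≤ t + 1 := by
          have := Finset.card_le_card (Finset.inter_subset_right
            (s₁ := Finset.range n) (s₂ := Finset.range (t + 1)))
          simp only [Finset.card_range] at this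
          exact_mod_cast this
  rw [h1]
  linarith

lemma goodF_card_ge (t M n : ℕ) (hn : L D N (2 ^ (t + 2) * (2 * M + 1) + 1) < n) :
    M ≤ (goodF D N t n).card := by
  have hmaps : ∀ k ∈ Finset.range M, 2 ^ (t + 2) * (2 * k + 1) ∈ goodF D N t n := by
    intro k hk
    rw [Finset.mem_range] at hk
    set ik := 2 ^ (t + 2) * (2 * k + 1) with hik
    have hb : IsBump ik := ⟨t, k, rfl⟩
    have htb : tb ik = t := tb_eq
    have hle : ik + 1 ≤ 2 ^ (t + 2) * (2 * M + 1) + 1 := by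
      have : 2 * k + 1 ≤ 2 * M + 1 := by omega
      have := Nat.mul_le_mul_left (2 ^ (t + 2)) this
      omega
    have hLle : L D N (ik + 1) ≤ L D N (2 ^ (t + 2) * (2 * M + 1) + 1) :=
      L_mono (P := P) hpart hAs hle
    have hikn : ik < n := by
      have := L_ge (P := P) (N := N) hpart hAs (ik + 1)
      omega
    refine Finset.mem_filter.mpr ⟨Finset.mem_range.mpr hikn, hb, htb, by omega, ?_⟩
    have := (bump_facts hb).1
    omega
  refine le_trans ?_ (Finset.card_le_card_of_injOn (fun k => 2 ^ (t + 2) * (2 * k + 1))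
    hmaps ?_)
  · simp
  · intro k1 _ k2 _ heq
    have hpos : (0 : ℕ) < 2 ^ (t + 2) := by positivity
    have := Nat.eq_of_mul_eq_mul_left hpos heq
    omega

lemma tendsto_top {t : ℕ} (hsg : sg t = 1) :
    Tendsto (fun n => mart P D N n (xc P D N t n)) atTop atTop := by
  rw [tendsto_atTop]
  intro b
  obtain ⟨M, hM⟩ := exists_nat_ge (b + (t + 1))
  rw [eventually_atTop]
  refine ⟨L D N (2 ^ (t + 2) * (2 * M + 1) + 1) + 1, fun n hn => ?_⟩
  have hcard := goodF_card_ge (P := P) (N := N) hpart hAs t M n (by omega)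
  have hest := key_est (N := N) hpart hAs t n
  rw [hsg, one_mul] at hest
  have : (M : ℝ) ≤ (goodF D N t n).card := by exact_mod_cast hcard
  linarith

lemma tendsto_bot {t : ℕ} (hsg : sg t = -1) :
    Tendsto (fun n => mart P D N n (xc P D N t n)) atTop atBot := by
  rw [tendsto_atBot]
  intro b
  obtain ⟨M, hM⟩ := exists_nat_ge (-b + (t + 1))
  rw [eventually_atTop]
  refine ⟨L D N (2 ^ (t + 2) * (2 * M + 1) + 1) + 1, fun n hn => ?_⟩
  have hcard := goodF_card_ge (P := P) (N := N) hpart hAs t M n (by omega)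
  have hest := key_est (N := N) hpart hAs t n
  rw [hsg] at hest
  have : (M : ℝ) ≤ (goodF D N t n).card := by exact_mod_cast hcard
  linarith

end
end Con


namespace Con
variable [MeasurableSpace Ω] {P : Measure Ω} {D : ℕ → Finset (Set Ω)} {N : ℕ}
attribute [local instance] Classical.propDecidable
set_option linter.unusedSectionVars false
variable [IsProbabilityMeasure P]

section
variable [Nonempty Ω] (hpart : IsPartitionSeq D) (hAs : AssumptionA P D)

variable (P D N) in
def xpt (hpart : IsPartitionSeq D) (hAs : AssumptionA P D) (t : ℕ) : Kt D :=
  ⟨xc P D N t, fun n => (xc_spec hpart hAs t n).1, fun n m h => xc_antitone hpart hAs t h⟩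

include hpart hAs

lemma exists_in_open (U : Set (Kt D)) (hU : IsOpen U) (hUne : U.Nonempty) (bit : ℕ)
    (hbit : bit ≤ 1) :
    ∃ t, xpt P D N hpart hAs t ∈ U ∧ sg t = (if bit = 0 then (1 : ℝ) else -1) := by
  obtain ⟨x₀, hx₀U⟩ := hUne
  obtain ⟨V, hV, hVU⟩ := isOpen_induced_iff.mp hU
  have hx₀V : x₀.1 ∈ V := by rw [← hVU] at hx₀U; exact hx₀U
  obtain ⟨I, u, hIu, hpi⟩ := isOpen_pi_iff.mp hV x₀.1 hx₀V
  set m := I.sup id with hm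
  have hB : x₀.1 m ∈ D m := x₀.2.1 m
  obtain ⟨t, hmt1, hmt, htgt, hsg⟩ := exists_target (D := D) hB bit hbit m
  refine ⟨t, ?_, hsg⟩
  have hcoord : ∀ i ∈ I, (xpt P D N hpart hAs t).1 i = x₀.1 i := by
    intro i hiI
    have him : i ≤ m := Finset.le_sup (f := id) hiI
    have hchain : ch P D N (max (t + 1) i) t ⊆ x₀.1 i := by
      have h1 : ch P D N (max (t + 1) i) t ⊆ tgtAtom D t :=
        (ch_inv (N := N) hpart hAs (max (t + 1) i) t
          (lt_of_lt_of_le (Nat.lt_succ_self t) (le_max_left _ _))).2.2.1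
      rw [htgt] at h1
      exact h1.trans (x₀.2.2 i m him)
    exact (xc_eq hpart hAs t i (max (t + 1) i) (le_refl _) (x₀.2.1 i) hchain).symm
  rw [← hVU]
  refine hpi ?_
  intro i hiI
  rw [hcoord i hiI]
  exact (hIu i hiI).2

lemma dense_top :
    Dense {x : Kt D | Tendsto (fun n => mart P D N n (x.1 n)) atTop atTop} := by
  rw [dense_iff_inter_open]
  intro U hU hUne
  obtain ⟨t, htU, hsg⟩ := exists_in_open hpart hAs U hU hUne 0 (by norm_num)
  rw [if_pos rfl] at hsg
  exact ⟨xpt P D N hpart hAs t, htU, tendsto_top hpart hAs hsg⟩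

lemma dense_bot :
    Dense {x : Kt D | Tendsto (fun n => mart P D N n (x.1 n)) atTop atBot} := by
  rw [dense_iff_inter_open]
  intro U hU hUne
  obtain ⟨t, htU, hsg⟩ := exists_in_open hpart hAs U hU hUne 1 (by norm_num)
  rw [if_neg (by norm_num)] at hsg
  exact ⟨xpt P D N hpart hAs t, htU, tendsto_bot hpart hAs hsg⟩

end
end Con



/-- Lemma (l:ui): given `N`, there is a martingale `f` adapted to the filtration with
(a) `f_1 = … = f_N = 0`, (b) `f` is `L^p`-bounded for every `p ∈ [1,∞)`,
(c) `lim f_n(x) = +∞` on a dense subset of `K` and (d) `lim f_n(x) = -∞` on a dense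
subset of `K`. -/
theorem statement16 [MeasurableSpace Ω] (P : Measure Ω) [IsProbabilityMeasure P]
    (D : ℕ → Finset (Set Ω)) (hpart : IsPartitionSeq D) (hA : AssumptionA P D) (N : ℕ) :
    ∃ f : ℕ → Set Ω → ℝ, IsMart P D f ∧
      (∀ n ≤ N, ∀ A : Set Ω, f n A = 0) ∧
      (∀ p : ℝ≥0∞, 1 ≤ p → p ≠ ∞ → martNorm P D p f ≠ ∞) ∧
      Dense {x : Kt D | Filter.Tendsto (fun n => f n (x.1 n)) Filter.atTop Filter.atTop} ∧
      Dense {x : Kt D | Filter.Tendsto (fun n => f n (x.1 n)) Filter.atTop Filter.atBot} := by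
  rcases isEmpty_or_nonempty Ω with hΩ | hΩ
  · refine ⟨fun _ _ => 0, ⟨fun _ _ _ => rfl, fun n m _ A _ => ?_⟩, fun _ _ _ => rfl,
      fun p _ _ => ?_, ?_, ?_⟩
    · simp [mval]
    · have : ∀ n, lpNorm P D p (fun _ _ => (0 : ℝ)) n = 0 := by
        intro n
        have : mval D (fun _ _ => (0 : ℝ)) n = fun _ => 0 := by
          funext w; simp [mval]
        rw [lpNorm, this]
        exact eLpNorm_zero'
      rw [martNorm]
      simp [this]
    · intro x
      obtain ⟨w, _⟩ := hpart.2.1 0 (x.1 0) (x.2.1 0)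
      exact (IsEmpty.false w).elim
    · intro x
      obtain ⟨w, _⟩ := hpart.2.1 0 (x.1 0) (x.2.1 0)
      exact (IsEmpty.false w).elim
  · exact ⟨Con.mart P D N, Con.isMart_mart hpart hA,
      fun n hn A => Con.mart_zero_le_N hpart hA hn A,
      fun p hp1 hp2 => Con.martNorm_ne_top hpart hA hp1 hp2,
      Con.dense_top hpart hA, Con.dense_bot hpart hA⟩

end MartingalePaper
end
end

section
/- Let N ∈ ℕ and h ∈ L^∞(Σ_N) be given with ‖h‖_{L^∞} < 1. Then there is a martingale f = (f_n) adapted to the filtration (Σ_n) with the following properties: (a) f_N = h; (b) sup_n ‖f_n‖_{L^∞} ≤ 1; (c) the set {x ∈ K : lim_{n→∞} f_n(x) = 1} is dense in K; (d) the set {x ∈ K : lim_{n→∞} f_n(x) = −1} is dense in K. -/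
open MeasureTheory Filter Set
open scoped ENNReal Topology

noncomputable section

namespace MartingalePaper

variable {Ω : Type}

section Aux

open scoped Classical
set_option linter.unusedSectionVars false

variable [MeasurableSpace Ω] (P : Measure Ω) (D : ℕ → Finset (Set Ω))

/-- real measure -/
def pr (A : Set Ω) : ℝ := (P A).toReal

/-- atoms of `D m` below `A` -/
def below (m : ℕ) (A : Set Ω) : Finset (Set Ω) := (D m).filter (fun B => B ⊆ A)

variable {D}

lemma mem_of_below {m : ℕ} {A B : Set Ω} (h : B ∈ below D m A) : B ∈ D m :=
  (Finset.mem_filter.1 h).1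

lemma subset_of_below {m : ℕ} {A B : Set Ω} (h : B ∈ below D m A) : B ⊆ A :=
  (Finset.mem_filter.1 h).2

section Part
variable (hpart : IsPartitionSeq D)
include hpart

lemma parent_unique {n : ℕ} {A A' B : Set Ω} (hA : A ∈ D n) (hA' : A' ∈ D n)
    (hB : B.Nonempty) (h1 : B ⊆ A) (h2 : B ⊆ A') : A = A' := by
  by_contra hne
  have := hpart.2.2.1 n hA hA' hne
  obtain ⟨w, hw⟩ := hB
  exact (Set.disjoint_left.1 this (h1 hw)) (h2 hw)

lemma exists_parent {n m : ℕ} (hnm : n ≤ m) {B : Set Ω} (hB : B ∈ D m) :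
    ∃ A ∈ D n, B ⊆ A := by
  induction m, hnm using Nat.le_induction generalizing B with
  | base => exact ⟨B, hB, subset_rfl⟩
  | succ m hm ih =>
    obtain ⟨C, hC, hBC⟩ := hpart.2.2.2.2 m B hB
    obtain ⟨A, hA, hCA⟩ := ih hC
    exact ⟨A, hA, hBC.trans hCA⟩

lemma eq_biUnion_below {n m : ℕ} (hnm : n ≤ m) {A : Set Ω} (hA : A ∈ D n) :
    A = ⋃ B ∈ below D m A, B := by
  apply Set.Subset.antisymm
  · intro w hw
    have : w ∈ (Set.univ : Set Ω) := trivial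
    rw [← hpart.2.2.2.1 m] at this
    simp only [Set.mem_iUnion] at this
    obtain ⟨B, hB, hwB⟩ := this
    obtain ⟨A', hA', hBA'⟩ := exists_parent hpart hnm hB
    have : A = A' := by
      by_contra hne
      exact (Set.disjoint_left.1 (hpart.2.2.1 n hA hA' hne) hw) (hBA' hwB)
    subst this
    exact Set.mem_iUnion.2 ⟨B, Set.mem_iUnion.2 ⟨Finset.mem_filter.2 ⟨hB, hBA'⟩, hwB⟩⟩
  · intro w hw
    simp only [Set.mem_iUnion] at hw
    obtain ⟨B, hB, hwB⟩ := hw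
    exact subset_of_below hB hwB

lemma below_self {n : ℕ} {A : Set Ω} (hA : A ∈ D n) : below D n A = {A} := by
  ext B
  simp only [below, Finset.mem_filter, Finset.mem_singleton]
  constructor
  · rintro ⟨hB, hBA⟩
    exact parent_unique hpart hB hA (hpart.2.1 n B hB) subset_rfl hBA
  · rintro rfl; exact ⟨hA, subset_rfl⟩

lemma below_trans {n m M : ℕ} (hnm : n ≤ m) (hmM : m ≤ M) {A : Set Ω} (hA : A ∈ D n) :
    below D M A = (below D m A).biUnion (fun C => below D M C) := by
  ext B
  simp only [below, Finset.mem_biUnion, Finset.mem_filter]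
  constructor
  · rintro ⟨hB, hBA⟩
    obtain ⟨C, hC, hBC⟩ := exists_parent hpart hmM hB
    obtain ⟨A', hA', hCA'⟩ := exists_parent hpart hnm hC
    have hBne := hpart.2.1 M B hB
    have : A = A' := parent_unique hpart hA hA' hBne hBA (hBC.trans hCA')
    exact ⟨C, ⟨hC, this ▸ hCA'⟩, hB, hBC⟩
  · rintro ⟨C, ⟨hC, hCA⟩, hB, hBC⟩
    exact ⟨hB, hBC.trans hCA⟩

lemma below_disjoint {m M : ℕ} {C C' : Set Ω} (hC : C ∈ D m) (hC' : C' ∈ D m)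
    (hne : C ≠ C') : Disjoint (below D M C) (below D M C') := by
  rw [Finset.disjoint_left]
  intro B hB hB'
  exact hne (parent_unique hpart hC hC' (hpart.2.1 M B (mem_of_below hB))
    (subset_of_below hB) (subset_of_below hB'))

lemma sum_below_measure {n m : ℕ} (hnm : n ≤ m) {A : Set Ω} (hA : A ∈ D n) :
    P A = ∑ B ∈ below D m A, P B := by
  conv_lhs => rw [eq_biUnion_below hpart hnm hA]
  exact measure_biUnion_finset
    ((hpart.2.2.1 m).subset (Finset.coe_subset.2 (Finset.filter_subset _ _)))
    (fun B hB => hpart.1 m B (mem_of_below hB))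

lemma sum_below_pr [IsFiniteMeasure P] {n m : ℕ} (hnm : n ≤ m) {A : Set Ω} (hA : A ∈ D n) :
    pr P A = ∑ B ∈ below D m A, pr P B := by
  rw [pr, sum_below_measure P hpart hnm hA, ENNReal.toReal_sum]
  · rfl
  · exact fun B hB => measure_ne_top P B

end Part
end Aux
section Defs
open scoped Classical
set_option linter.unusedSectionVars false

variable [MeasurableSpace Ω] (P : Measure Ω) (D : ℕ → Finset (Set Ω))

/-- the parent atom at level `m` -/
def parent (m : ℕ) (B : Set Ω) : Set Ω :=
  if h : ∃ A ∈ D m, B ⊆ A then h.choose else ∅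

/-- a child of minimal (at most half) measure -/
def sch (m : ℕ) (A : Set Ω) : Set Ω :=
  if h : ∃ B ∈ below D (m+1) A, 2 * pr P B ≤ pr P A then h.choose else ∅

/-- a child different from `sch` -/
def och (m : ℕ) (A : Set Ω) : Set Ω :=
  if h : ∃ B ∈ below D (m+1) A, B ≠ sch P D m A then h.choose else ∅

/-- one step of the value/phase recursion -/
def nextVal (m : ℕ) (vp : Set Ω → ℝ × Bool) : Set Ω → ℝ × Bool := fun B =>
  let A := parent D m B
  let v := (vp A).1
  let b := (vp A).2
  if A ∈ D (m+1) then (v, b)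
  else
    let B₁ := sch P D m A
    let s : ℝ := if b then 1 else -1
    let w := s * v
    let t := min ((1 - w)/2) ((1 + w) * (pr P A - pr P B₁) / (2 * pr P B₁))
    if B = B₁ then (v + s * t, !b)
    else (v - s * (t * pr P B₁ / (pr P A - pr P B₁)), !b)

variable (N : ℕ) (h : Set Ω → ℝ)

/-- the value/phase recursion from level `N` -/
def valsAux : ℕ → Set Ω → ℝ × Bool
  | 0 => fun A => (h A, true)
  | k+1 => nextVal P D (N + k) (valsAux k)

/-- average of `h` below `A` -/
def avg (A : Set Ω) : ℝ := (∑ B ∈ below D N A, pr P B * h B) / pr P A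

/-- the value of the martingale on an atom of `D n` -/
def val (n : ℕ) (A : Set Ω) : ℝ :=
  if n < N then avg P D N h A else (valsAux P D N h (n - N) A).1

/-- the phase of an atom -/
def phs (n : ℕ) (A : Set Ω) : Bool := (valsAux P D N h (n - N) A).2

/-- the martingale -/
def mfun (n : ℕ) (A : Set Ω) : ℝ := if A ∈ D n then val P D N h n A else 0

end Defs

section Specs
open scoped Classical
set_option linter.unusedSectionVars false

variable [MeasurableSpace Ω] (P : Measure Ω) [IsProbabilityMeasure P]
  {D : ℕ → Finset (Set Ω)} (hpart : IsPartitionSeq D) (hA : AssumptionA P D)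

include hpart

lemma parent_spec {m : ℕ} {B : Set Ω} (hB : B ∈ D (m+1)) :
    parent D m B ∈ D m ∧ B ⊆ parent D m B := by
  have hex : ∃ A ∈ D m, B ⊆ A := hpart.2.2.2.2 m B hB
  rw [parent, dif_pos hex]
  exact ⟨hex.choose_spec.1, hex.choose_spec.2⟩

lemma parent_eq {m : ℕ} {B C : Set Ω} (hC : C ∈ D m) (hB : B ∈ below D (m+1) C) :
    parent D m B = C := by
  obtain ⟨hP1, hP2⟩ := parent_spec hpart (mem_of_below hB)
  exact parent_unique hpart hP1 hC (hpart.2.1 _ B (mem_of_below hB)) hP2 (subset_of_below hB)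

lemma parent_eq_self {m : ℕ} {C : Set Ω} (hC : C ∈ D m) (hC' : C ∈ D (m+1)) :
    parent D m C = C := by
  obtain ⟨hP1, hP2⟩ := parent_spec hpart hC'
  exact parent_unique hpart hP1 hC (hpart.2.1 _ C hC') hP2 subset_rfl

lemma below_nonempty {m M : ℕ} (hmM : m ≤ M) {A : Set Ω} (hAm : A ∈ D m) :
    (below D M A).Nonempty := by
  obtain ⟨w, hw⟩ := hpart.2.1 m A hAm
  have hw' : w ∈ ⋃ B ∈ below D M A, B := (eq_biUnion_below hpart hmM hAm) ▸ hw
  simp only [Set.mem_iUnion] at hw'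
  obtain ⟨B, hB, _⟩ := hw'
  exact ⟨B, hB⟩

lemma split_two {m : ℕ} {A : Set Ω} (hAm : A ∈ D m) (hns : A ∉ D (m+1)) :
    ∃ B ∈ below D (m+1) A, ∃ B' ∈ below D (m+1) A, B ≠ B' := by
  obtain ⟨B, hB⟩ := below_nonempty hpart m.le_succ hAm
  by_contra hcon
  push_neg at hcon
  have hsing : below D (m+1) A = {B} := by
    apply Finset.eq_singleton_iff_unique_mem.2 ⟨hB, ?_⟩
    intro B' hB'
    exact (hcon B' hB' B hB).symm ▸ rfl
  have : A = B := by
    have := eq_biUnion_below hpart m.le_succ hAm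
    rw [hsing] at this
    simpa using this
  exact hns (this ▸ mem_of_below hB)

lemma sch_spec {m : ℕ} {A : Set Ω} (hAm : A ∈ D m) (hns : A ∉ D (m+1)) :
    sch P D m A ∈ below D (m+1) A ∧ 2 * pr P (sch P D m A) ≤ pr P A := by
  have hex : ∃ B ∈ below D (m+1) A, 2 * pr P B ≤ pr P A := by
    obtain ⟨B0, hB0, B1, hB1, hne⟩ := split_two hpart hAm hns
    obtain ⟨B, hB, hmin⟩ := Finset.exists_min_image (below D (m+1) A) (pr P) ⟨B0, hB0⟩
    refine ⟨B, hB, ?_⟩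
    rcases eq_or_ne B B0 with rfl | hne0
    · have hpair : ({B1, B} : Finset (Set Ω)) ⊆ below D (m+1) A := by
        intro x hx; rcases Finset.mem_insert.1 hx with rfl | hx
        · exact hB1
        · simpa using Finset.mem_singleton.1 hx ▸ hB
      have hsum : pr P B1 + pr P B ≤ ∑ C ∈ below D (m+1) A, pr P C := by
        have := Finset.sum_le_sum_of_subset_of_nonneg (f := pr P) hpair
          (fun x _ _ => ENNReal.toReal_nonneg)
        rwa [Finset.sum_pair hne.symm] at this
      rw [← sum_below_pr P hpart m.le_succ hAm] at hsum
      nlinarith [hmin B1 hB1]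
    · have hpair : ({B0, B} : Finset (Set Ω)) ⊆ below D (m+1) A := by
        intro x hx; rcases Finset.mem_insert.1 hx with rfl | hx
        · exact hB0
        · simpa using Finset.mem_singleton.1 hx ▸ hB
      have hsum : pr P B0 + pr P B ≤ ∑ C ∈ below D (m+1) A, pr P C := by
        have := Finset.sum_le_sum_of_subset_of_nonneg (f := pr P) hpair
          (fun x _ _ => ENNReal.toReal_nonneg)
        rwa [Finset.sum_pair hne0.symm] at this
      rw [← sum_below_pr P hpart m.le_succ hAm] at hsum
      nlinarith [hmin B0 hB0]
  rw [sch, dif_pos hex]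
  exact ⟨hex.choose_spec.1, hex.choose_spec.2⟩

lemma och_spec {m : ℕ} {A : Set Ω} (hAm : A ∈ D m) (hns : A ∉ D (m+1)) :
    och P D m A ∈ below D (m+1) A ∧ och P D m A ≠ sch P D m A := by
  have hex : ∃ B ∈ below D (m+1) A, B ≠ sch P D m A := by
    obtain ⟨B0, hB0, B1, hB1, hne⟩ := split_two hpart hAm hns
    rcases eq_or_ne B0 (sch P D m A) with rfl | h0
    · exact ⟨B1, hB1, fun hcon => hne (hcon.symm)⟩
    · exact ⟨B0, hB0, h0⟩
  rw [och, dif_pos hex]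
  exact ⟨hex.choose_spec.1, hex.choose_spec.2⟩

end Specs
section Vals
open scoped Classical
set_option linter.unusedSectionVars false

variable [MeasurableSpace Ω] (P : Measure Ω) (D : ℕ → Finset (Set Ω)) (N : ℕ) (h : Set Ω → ℝ)

/-- sign of a phase -/
def sgn (b : Bool) : ℝ := if b then 1 else -1

/-- oriented value -/
def orv (m : ℕ) (C : Set Ω) : ℝ := sgn (phs P D N h m C) * val P D N h m C

/-- step size at a split -/
def stp (m : ℕ) (C : Set Ω) : ℝ :=
  min ((1 - orv P D N h m C)/2)
    ((1 + orv P D N h m C) * (pr P C - pr P (sch P D m C)) / (2 * pr P (sch P D m C)))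

/-- compensating step at a split -/
def dstp (m : ℕ) (C : Set Ω) : ℝ :=
  stp P D N h m C * pr P (sch P D m C) / (pr P C - pr P (sch P D m C))

lemma sgn_mul_self (b : Bool) : sgn b * sgn b = 1 := by cases b <;> simp [sgn]

lemma abs_sgn (b : Bool) : |sgn b| = 1 := by cases b <;> simp [sgn]

lemma val_of_not_lt {n : ℕ} (hn : ¬ n < N) (A : Set Ω) :
    val P D N h n A = (valsAux P D N h (n - N) A).1 := by rw [val, if_neg hn]

lemma val_N (A : Set Ω) : val P D N h N A = h A := by
  rw [val_of_not_lt P D N h (lt_irrefl N), Nat.sub_self]; rfl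

lemma phs_N (A : Set Ω) : phs P D N h N A = true := by
  rw [phs, Nat.sub_self]; rfl

lemma valsAux_succ_eq {m : ℕ} (hm : N ≤ m) (B : Set Ω) :
    valsAux P D N h (m + 1 - N) B = nextVal P D m (valsAux P D N h (m - N)) B := by
  have h1 : m + 1 - N = (m - N) + 1 := by omega
  have h2 : N + (m - N) = m := by omega
  rw [h1]
  show nextVal P D (N + (m - N)) (valsAux P D N h (m - N)) B = _
  rw [h2]

variable {P D}
variable (hpart : IsPartitionSeq D)
include hpart

lemma step_nosplit {m : ℕ} (hm : N ≤ m) {C : Set Ω} (hC : C ∈ D m) (hC' : C ∈ D (m+1)) :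
    val P D N h (m+1) C = val P D N h m C ∧ phs P D N h (m+1) C = phs P D N h m C := by
  have hpar : parent D m C = C := parent_eq_self hpart hC hC'
  have e : valsAux P D N h (m + 1 - N) C = valsAux P D N h (m - N) C := by
    rw [valsAux_succ_eq P D N h hm, nextVal]
    simp only [hpar, if_pos hC']
  constructor
  · rw [val_of_not_lt P D N h (by omega), val_of_not_lt P D N h (by omega), e]
  · rw [phs, phs, e]

lemma step_split {m : ℕ} (hm : N ≤ m) {C : Set Ω} (hC : C ∈ D m) (hns : C ∉ D (m+1))
    {B : Set Ω} (hB : B ∈ below D (m+1) C) :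
    (val P D N h (m+1) B =
      (if B = sch P D m C
        then val P D N h m C + sgn (phs P D N h m C) * stp P D N h m C
        else val P D N h m C - sgn (phs P D N h m C) * dstp P D N h m C)) ∧
    phs P D N h (m+1) B = !(phs P D N h m C) := by
  have hpar : parent D m B = C := parent_eq hpart hC hB
  have e : valsAux P D N h (m + 1 - N) B = nextVal P D m (valsAux P D N h (m - N)) B :=
    valsAux_succ_eq P D N h hm B
  have hv : (valsAux P D N h (m - N) C).1 = val P D N h m C :=
    (val_of_not_lt P D N h (by omega) C).symm
  have hb : (valsAux P D N h (m - N) C).2 = phs P D N h m C := rfl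
  rw [nextVal] at e
  simp only [hpar, if_neg hns] at e
  rw [hv, hb] at e
  have hw : (if phs P D N h m C then (1:ℝ) else -1) = sgn (phs P D N h m C) := rfl
  rw [hw] at e
  have ho : sgn (phs P D N h m C) * val P D N h m C = orv P D N h m C := rfl
  rw [ho] at e
  constructor
  · rw [val_of_not_lt P D N h (by omega), e]
    by_cases hBs : B = sch P D m C
    · simp only [if_pos hBs, stp]
    · simp only [if_neg hBs, dstp, stp]
  · rw [phs, e]
    by_cases hBs : B = sch P D m C
    · simp only [if_pos hBs]
    · simp only [if_neg hBs]

end Vals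
section Bounds
open scoped Classical
set_option linter.unusedSectionVars false

variable [MeasurableSpace Ω] {P : Measure Ω} [IsProbabilityMeasure P]
  {D : ℕ → Finset (Set Ω)} (N : ℕ) (h : Set Ω → ℝ)
  (hpart : IsPartitionSeq D) (hA : AssumptionA P D)

include hA in
lemma pr_pos {n : ℕ} {A : Set Ω} (hAn : A ∈ D n) : 0 < pr P A :=
  ENNReal.toReal_pos (hA.1 n A hAn).ne' (measure_ne_top P A)

include hpart hA in
lemma stp_bounds {m : ℕ} {C : Set Ω} (hC : C ∈ D m) (hns : C ∉ D (m+1))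
    (habs : |orv P D N h m C| < 1) :
    0 ≤ stp P D N h m C ∧ stp P D N h m C ≤ (1 - orv P D N h m C)/2 ∧
    min ((1 - orv P D N h m C)/2) ((1 + orv P D N h m C)/2) ≤ stp P D N h m C ∧
    0 ≤ dstp P D N h m C ∧ dstp P D N h m C ≤ (1 + orv P D N h m C)/2 := by
  obtain ⟨hmem, h2q⟩ := sch_spec P hpart hC hns
  have hq : 0 < pr P (sch P D m C) := pr_pos hA (mem_of_below hmem)
  have hw1 : orv P D N h m C < 1 := (abs_lt.1 habs).2
  have hw2 : -1 < orv P D N h m C := (abs_lt.1 habs).1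
  have hqc : pr P (sch P D m C) < pr P C := by linarith
  have h1 : 0 ≤ stp P D N h m C := by
    apply le_min
    · linarith
    · apply div_nonneg (by nlinarith) (by linarith)
  have h2 : stp P D N h m C ≤ (1 - orv P D N h m C)/2 := min_le_left _ _
  have hX : (1 + orv P D N h m C)/2 ≤
      (1 + orv P D N h m C) * (pr P C - pr P (sch P D m C)) / (2 * pr P (sch P D m C)) := by
    rw [div_le_div_iff₀ (by norm_num) (by linarith)]
    nlinarith
  have h3 : min ((1 - orv P D N h m C)/2) ((1 + orv P D N h m C)/2) ≤ stp P D N h m C :=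
    le_min (min_le_left _ _) ((min_le_right _ _).trans hX)
  have h4 : 0 ≤ dstp P D N h m C :=
    div_nonneg (mul_nonneg h1 hq.le) (by linarith)
  have hstpX : stp P D N h m C ≤
      (1 + orv P D N h m C) * (pr P C - pr P (sch P D m C)) / (2 * pr P (sch P D m C)) :=
    min_le_right _ _
  rw [le_div_iff₀ (by linarith)] at hstpX
  have h5 : dstp P D N h m C ≤ (1 + orv P D N h m C)/2 := by
    rw [dstp, div_le_div_iff₀ (by linarith) (by norm_num)]
    nlinarith
  exact ⟨h1, h2, h3, h4, h5⟩

include hpart hA in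
lemma abs_avg_lt_one (hh : ∀ A ∈ D N, |h A| < 1) {n : ℕ} (hn : n ≤ N)
    {A : Set Ω} (hAn : A ∈ D n) : |avg P D N h A| < 1 := by
  have hpA : 0 < pr P A := pr_pos hA hAn
  have hsum : pr P A = ∑ B ∈ below D N A, pr P B := sum_below_pr P hpart hn hAn
  have hne : (below D N A).Nonempty := below_nonempty hpart hn hAn
  have habs : |∑ B ∈ below D N A, pr P B * h B| < pr P A := by
    calc |∑ B ∈ below D N A, pr P B * h B| ≤ ∑ B ∈ below D N A, |pr P B * h B| :=
          Finset.abs_sum_le_sum_abs _ _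
      _ < ∑ B ∈ below D N A, pr P B := by
          apply Finset.sum_lt_sum_of_nonempty hne
          intro B hB
          have hBpos := pr_pos hA (mem_of_below hB)
          rw [abs_mul, abs_of_pos hBpos]
          have := hh B (mem_of_below hB)
          nlinarith
      _ = pr P A := hsum.symm
  rw [avg, abs_div, abs_of_pos hpA, div_lt_one hpA]
  exact habs

include hpart hA in
lemma abs_val_lt_one (hh : ∀ A ∈ D N, |h A| < 1) :
    ∀ n, ∀ A ∈ D n, |val P D N h n A| < 1 := by
  intro n
  rcases Nat.lt_or_ge n N with hn | hn
  · intro A hAn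
    rw [val, if_pos hn]
    exact abs_avg_lt_one N h hpart hA hh hn.le hAn
  · induction n, hn using Nat.le_induction with
    | base => intro A hAn; rw [val_N]; exact hh A hAn
    | succ m hm ih =>
      intro B hB
      obtain ⟨C, hC, hBC⟩ := hpart.2.2.2.2 m B hB
      have hCB : B ∈ below D (m+1) C := Finset.mem_filter.2 ⟨hB, hBC⟩
      have hvC : |val P D N h m C| < 1 := ih C hC
      have horvC : |orv P D N h m C| < 1 := by
        rw [orv, abs_mul, abs_sgn, one_mul]; exact hvC
      by_cases hns : C ∈ D (m+1)
      · have hBC' : B = C := parent_unique hpart hB hns (hpart.2.1 _ B hB) subset_rfl hBC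
        subst hBC'
        rw [(step_nosplit N h hpart hm hC hns).1]
        exact hvC
      · obtain ⟨hval, -⟩ := step_split N h hpart hm hC hns hCB
        obtain ⟨h1, h2, h3, h4, h5⟩ := stp_bounds N h hpart hA hC hns horvC
        rcases abs_lt.1 hvC with ⟨hv1, hv2⟩
        rw [hval, abs_lt]
        rcases Bool.eq_false_or_eq_true (phs P D N h m C) with hph | hph <;>
          simp only [orv, sgn, hph, Bool.false_eq_true, Bool.true_eq_false, if_true,
            if_false, reduceIte, one_mul, neg_mul, neg_one_mul] at h2 h5 ⊢ <;>
          by_cases hBs : B = sch P D m C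
        · rw [if_pos hBs]; constructor <;> linarith
        · rw [if_neg hBs]; constructor <;> linarith
        · rw [if_pos hBs]; constructor <;> linarith
        · rw [if_neg hBs]; constructor <;> linarith
end Bounds
section Mart
open scoped Classical
set_option linter.unusedSectionVars false

variable [MeasurableSpace Ω] {P : Measure Ω} [IsProbabilityMeasure P]
  {D : ℕ → Finset (Set Ω)} (N : ℕ) (h : Set Ω → ℝ)
  (hpart : IsPartitionSeq D) (hA : AssumptionA P D)

include hpart hA in
lemma avg_identity {n : ℕ} (hn : n ≤ N) {A : Set Ω} (hAn : A ∈ D n) :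
    pr P A * val P D N h n A = ∑ B ∈ below D N A, pr P B * h B := by
  rcases Nat.lt_or_ge n N with hlt | hge
  · rw [val, if_pos hlt, avg, mul_div_cancel₀ _ (pr_pos hA hAn).ne']
  · have : n = N := le_antisymm hn hge
    subst this
    rw [val_N, below_self hpart hAn, Finset.sum_singleton]

include hpart hA in
lemma consist {m : ℕ} {C : Set Ω} (hC : C ∈ D m) (hh : ∀ A ∈ D N, |h A| < 1) :
    ∑ B ∈ below D (m+1) C, pr P B * val P D N h (m+1) B = pr P C * val P D N h m C := by
  rcases Nat.lt_or_ge m N with hmN | hmN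
  · -- m + 1 ≤ N : use the averaging formula
    have hm1 : m + 1 ≤ N := hmN
    have e1 : ∀ B ∈ below D (m+1) C, pr P B * val P D N h (m+1) B
        = ∑ E ∈ below D N B, pr P E * h E := fun B hB =>
      avg_identity N h hpart hA hm1 (mem_of_below hB)
    rw [Finset.sum_congr rfl e1, ← Finset.sum_biUnion, ← below_trans hpart m.le_succ hm1 hC,
      avg_identity N h hpart hA hmN.le hC]
    · intro B hB B' hB' hne
      exact below_disjoint hpart (mem_of_below hB) (mem_of_below hB') hne
  · by_cases hns : C ∈ D (m+1)
    · rw [below_self hpart hns, Finset.sum_singleton, (step_nosplit N h hpart hmN hC hns).1]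
    · have hvC : |val P D N h m C| < 1 := abs_val_lt_one N h hpart hA hh m C hC
      have horvC : |orv P D N h m C| < 1 := by
        rw [orv, abs_mul, abs_sgn, one_mul]; exact hvC
      obtain ⟨hmem, h2q⟩ := sch_spec P hpart hC hns
      have hq : 0 < pr P (sch P D m C) := pr_pos hA (mem_of_below hmem)
      have hpC : 0 < pr P C := pr_pos hA hC
      have hqc : pr P (sch P D m C) < pr P C := by linarith
      set v := val P D N h m C
      set s := sgn (phs P D N h m C)
      set t := stp P D N h m C
      set d := dstp P D N h m C with hd
      have hrw : ∀ B ∈ below D (m+1) C, pr P B * val P D N h (m+1) B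
          = pr P B * (v - s * d) + (if B = sch P D m C then pr P B * (s * (t + d)) else 0) := by
        intro B hB
        rw [(step_split N h hpart hmN hC hns hB).1]
        by_cases hBs : B = sch P D m C
        · rw [if_pos hBs, if_pos hBs]; ring
        · rw [if_neg hBs, if_neg hBs]; ring
      rw [Finset.sum_congr rfl hrw, Finset.sum_add_distrib, ← Finset.sum_mul,
        ← sum_below_pr P hpart m.le_succ hC, Finset.sum_ite_eq' (below D (m+1) C)
          (sch P D m C) (fun B => pr P B * (s * (t + d))), if_pos hmem]
      have hdt : d * (pr P C - pr P (sch P D m C)) = t * pr P (sch P D m C) := by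
        rw [hd, dstp, div_mul_cancel₀ _ (by linarith)]
      linear_combination (-s) * hdt

include hpart hA in
lemma mart_sum {n m : ℕ} (hnm : n ≤ m) {A : Set Ω} (hAn : A ∈ D n)
    (hh : ∀ A ∈ D N, |h A| < 1) :
    ∑ B ∈ below D m A, pr P B * val P D N h m B = pr P A * val P D N h n A := by
  induction m, hnm using Nat.le_induction with
  | base => rw [below_self hpart hAn, Finset.sum_singleton]
  | succ m hm ih =>
    rw [below_trans hpart hm m.le_succ hAn, Finset.sum_biUnion]
    · rw [← ih]
      apply Finset.sum_congr rfl
      intro C hC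
      exact consist N h hpart hA (mem_of_below hC) hh
    · intro B hB B' hB' hne
      exact below_disjoint hpart (mem_of_below hB) (mem_of_below hB') hne

include hpart in
lemma setIntegral_mval (f : ℕ → Set Ω → ℝ) {n m : ℕ} (hnm : n ≤ m) {A : Set Ω}
    (hAn : A ∈ D n) :
    ∫ w in A, mval D f m w ∂P = ∑ B ∈ below D m A, pr P B * f m B := by
  have hint : ∀ B ∈ D m, Integrable (fun w => B.indicator (fun _ => f m B) w) (P.restrict A) :=
    fun B hB => (integrable_const (f m B)).indicator (hpart.1 m B hB)
  simp only [mval]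
  rw [integral_finset_sum _ hint]
  have e1 : ∀ B ∈ D m, ∫ w, B.indicator (fun _ => f m B) w ∂(P.restrict A)
      = (P (B ∩ A)).toReal * f m B := by
    intro B hB
    rw [integral_indicator_const _ (hpart.1 m B hB), measureReal_def, Measure.restrict_apply (hpart.1 m B hB),
      smul_eq_mul]
  rw [Finset.sum_congr rfl e1]
  rw [← Finset.sum_subset (Finset.filter_subset (fun B => B ⊆ A) (D m))
    (fun B hB hBn => ?_)]
  · apply Finset.sum_congr rfl
    intro B hB
    rw [Set.inter_eq_self_of_subset_left (subset_of_below hB)]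
    rfl
  · have hnsub : ¬ B ⊆ A := fun hsub => hBn (Finset.mem_filter.2 ⟨hB, hsub⟩)
    obtain ⟨A', hA', hBA'⟩ := exists_parent hpart hnm hB
    have hne : A' ≠ A := fun hEq => hnsub (hEq ▸ hBA')
    have hempty : B ∩ A = ∅ := by
      apply Set.eq_empty_of_subset_empty
      intro w hw
      exact (Set.disjoint_left.1 (hpart.2.2.1 n hA' hAn hne) (hBA' hw.1)) hw.2
    rw [hempty]; simp

end Mart
section MartProps
open scoped Classical
set_option linter.unusedSectionVars false

variable [MeasurableSpace Ω] {P : Measure Ω} [IsProbabilityMeasure P]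
  {D : ℕ → Finset (Set Ω)} (N : ℕ) (h : Set Ω → ℝ)
  (hpart : IsPartitionSeq D) (hA : AssumptionA P D)

include hpart hA in
lemma mfun_isMart (hh : ∀ A ∈ D N, |h A| < 1) : IsMart P D (mfun P D N h) := by
  constructor
  · intro n A hAn
    rw [mfun, if_neg hAn]
  · intro n m hnm A hAn
    rw [setIntegral_mval hpart _ (le_refl n) hAn, setIntegral_mval hpart _ hnm hAn,
      below_self hpart hAn, Finset.sum_singleton]
    have e1 : ∀ B ∈ below D m A, pr P B * mfun P D N h m B = pr P B * val P D N h m B := by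
      intro B hB
      rw [mfun, if_pos (mem_of_below hB)]
    rw [Finset.sum_congr rfl e1, mart_sum N h hpart hA hnm hAn hh, mfun, if_pos hAn]

include hpart hA in
lemma mval_abs_le_one (hh : ∀ A ∈ D N, |h A| < 1) (n : ℕ) (w : Ω) :
    |mval D (mfun P D N h) n w| ≤ 1 := by
  have hw : w ∈ ⋃ A ∈ D n, A := by rw [hpart.2.2.2.1 n]; trivial
  simp only [Set.mem_iUnion] at hw
  obtain ⟨A, hAn, hwA⟩ := hw
  rw [mval, Finset.sum_eq_single A]
  · rw [Set.indicator_of_mem hwA, mfun, if_pos hAn]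
    exact (abs_val_lt_one N h hpart hA hh n A hAn).le
  · intro B hBn hne
    apply Set.indicator_of_notMem
    exact fun hwB => (Set.disjoint_left.1 (hpart.2.2.1 n hBn hAn hne) hwB) hwA
  · intro hcon; exact absurd hAn hcon

include hpart hA in
lemma mfun_martNorm_le (hh : ∀ A ∈ D N, |h A| < 1) :
    martNorm P D ∞ (mfun P D N h) ≤ 1 := by
  apply iSup_le
  intro n
  rw [lpNorm]
  have := eLpNorm_le_of_ae_bound (μ := P) (p := ∞) (f := mval D (mfun P D N h) n) (C := 1)
    (Filter.Eventually.of_forall fun w => by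
      rw [Real.norm_eq_abs]; exact mval_abs_le_one N h hpart hA hh n w)
  simpa using this

end MartProps
section Chain
open scoped Classical
set_option linter.unusedSectionVars false

variable [MeasurableSpace Ω] (P : Measure Ω) (D : ℕ → Finset (Set Ω)) (N : ℕ) (h : Set Ω → ℝ)

/-- next atom along the strategy chain -/
def nxt (sg : Bool) (m : ℕ) (C : Set Ω) : Set Ω :=
  if C ∈ D (m+1) then C
  else if phs P D N h m C = sg then sch P D m C else och P D m C

/-- the strategy chain started at `A ∈ D n₀` -/
def chainFrom (sg : Bool) (n₀ : ℕ) (A : Set Ω) : ℕ → Set Ω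
  | 0 => A
  | k+1 => nxt P D N h sg (n₀ + k) (chainFrom sg n₀ A k)

/-- oriented value along the chain -/
def Wc (sg : Bool) (n₀ : ℕ) (A : Set Ω) (k : ℕ) : ℝ :=
  sgn sg * val P D N h (n₀ + k) (chainFrom P D N h sg n₀ A k)

variable {P D}
variable [IsProbabilityMeasure P]
  (hpart : IsPartitionSeq D) (hA : AssumptionA P D)
  {sg : Bool} {n₀ : ℕ} {A : Set Ω} (hn₀ : N ≤ n₀) (hAmem : A ∈ D n₀)

include hpart hAmem in
lemma chain_mem : ∀ k, chainFrom P D N h sg n₀ A k ∈ D (n₀ + k) := by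
  intro k
  induction k with
  | zero => exact hAmem
  | succ k ih =>
    show nxt P D N h sg (n₀ + k) (chainFrom P D N h sg n₀ A k) ∈ D (n₀ + k + 1)
    rw [nxt]
    by_cases hs : chainFrom P D N h sg n₀ A k ∈ D (n₀ + k + 1)
    · rw [if_pos hs]; exact hs
    · rw [if_neg hs]
      by_cases hph : phs P D N h (n₀ + k) (chainFrom P D N h sg n₀ A k) = sg
      · rw [if_pos hph]; exact mem_of_below (sch_spec P hpart ih hs).1
      · rw [if_neg hph]; exact mem_of_below (och_spec P hpart ih hs).1

include hpart hAmem in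
lemma chain_subset : ∀ k, chainFrom P D N h sg n₀ A (k+1) ⊆ chainFrom P D N h sg n₀ A k := by
  intro k
  show nxt P D N h sg (n₀ + k) (chainFrom P D N h sg n₀ A k) ⊆ _
  rw [nxt]
  by_cases hs : chainFrom P D N h sg n₀ A k ∈ D (n₀ + k + 1)
  · rw [if_pos hs]
  · rw [if_neg hs]
    have ih := chain_mem (P := P) (sg := sg) N h hpart hAmem k
    by_cases hph : phs P D N h (n₀ + k) (chainFrom P D N h sg n₀ A k) = sg
    · rw [if_pos hph]; exact subset_of_below (sch_spec P hpart ih hs).1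
    · rw [if_neg hph]; exact subset_of_below (och_spec P hpart ih hs).1

include hpart hA hn₀ hAmem in
lemma chain_W_bounds (hh : ∀ B ∈ D N, |h B| < 1) (k : ℕ) :
    |Wc P D N h sg n₀ A k| < 1 := by
  rw [Wc, abs_mul, abs_sgn, one_mul]
  exact abs_val_lt_one N h hpart hA hh _ _ (chain_mem N h hpart hAmem k)

include hpart hA hn₀ hAmem in
lemma chain_W_step (hh : ∀ B ∈ D N, |h B| < 1) (k : ℕ) :
    Wc P D N h sg n₀ A k ≤ Wc P D N h sg n₀ A (k+1) ∧
    (chainFrom P D N h sg n₀ A k ∉ D (n₀ + k + 1) →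
      phs P D N h (n₀ + k) (chainFrom P D N h sg n₀ A k) = sg →
      Wc P D N h sg n₀ A k
        + min ((1 - Wc P D N h sg n₀ A k)/2) ((1 + Wc P D N h sg n₀ A k)/2)
        ≤ Wc P D N h sg n₀ A (k+1)) := by
  set C := chainFrom P D N h sg n₀ A k with hCdef
  have hC : C ∈ D (n₀ + k) := chain_mem (P := P) (sg := sg) N h hpart hAmem k
  have hvC : |val P D N h (n₀ + k) C| < 1 := abs_val_lt_one N h hpart hA hh _ _ hC
  have horv : |orv P D N h (n₀ + k) C| < 1 := by
    rw [orv, abs_mul, abs_sgn, one_mul]; exact hvC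
  have hm : N ≤ n₀ + k := le_trans hn₀ (Nat.le_add_right _ _)
  have hnext : chainFrom P D N h sg n₀ A (k+1) = nxt P D N h sg (n₀ + k) C := rfl
  by_cases hs : C ∈ D (n₀ + k + 1)
  · have : chainFrom P D N h sg n₀ A (k+1) = C := by rw [hnext, nxt, if_pos hs]
    constructor
    · rw [Wc, Wc, ← hCdef, this, show n₀ + (k+1) = n₀ + k + 1 from rfl,
        (step_nosplit (P := P) N h hpart hm hC hs).1]
    · intro hcon; exact absurd hs hcon
  · obtain ⟨h1, h2, h3, h4, h5⟩ := stp_bounds N h hpart hA hC hs horv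
    have horveq : orv P D N h (n₀ + k) C
        = sgn (phs P D N h (n₀ + k) C) * val P D N h (n₀ + k) C := rfl
    by_cases hph : phs P D N h (n₀ + k) C = sg
    · -- favorable split: go to the small child
      have hBmem := (sch_spec P hpart hC hs).1
      have : chainFrom P D N h sg n₀ A (k+1) = sch P D (n₀ + k) C := by
        rw [hnext, nxt, if_neg hs, if_pos hph]
      have hval := (step_split (P := P) N h hpart hm hC hs hBmem).1
      rw [if_pos rfl] at hval
      have hW : Wc P D N h sg n₀ A (k+1)
          = Wc P D N h sg n₀ A k + stp P D N h (n₀ + k) C := by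
        rw [Wc, Wc, ← hCdef, this, show n₀ + (k+1) = n₀ + k + 1 from rfl, hval, hph]
        linear_combination stp P D N h (n₀ + k) C * sgn_mul_self sg
      have horvW : orv P D N h (n₀ + k) C = Wc P D N h sg n₀ A k := by
        rw [horveq, hph, Wc, hCdef]
      constructor
      · rw [hW]; linarith
      · intro _ _
        rw [hW, ← horvW]
        linarith [h3]
    · -- unfavorable split: go to the other child, value does not decrease
      have hBmem := (och_spec P hpart hC hs).1
      have hBne := (och_spec P hpart hC hs).2
      have : chainFrom P D N h sg n₀ A (k+1) = och P D (n₀ + k) C := by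
        rw [hnext, nxt, if_neg hs, if_neg hph]
      have hval := (step_split (P := P) N h hpart hm hC hs hBmem).1
      rw [if_neg hBne] at hval
      have hsgn : sgn sg * sgn (phs P D N h (n₀ + k) C) = -1 := by
        cases sg <;> cases hb : phs P D N h (n₀ + k) C <;>
          simp_all [sgn]
      have hW : Wc P D N h sg n₀ A (k+1)
          = Wc P D N h sg n₀ A k + dstp P D N h (n₀ + k) C := by
        rw [Wc, Wc, ← hCdef, this, show n₀ + (k+1) = n₀ + k + 1 from rfl, hval]
        linear_combination (-(dstp P D N h (n₀ + k) C)) * hsgn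
      constructor
      · rw [hW]; linarith
      · intro _ hcon; exact absurd hcon hph

include hpart hAmem in
lemma chain_phase_step (k : ℕ) (hm : N ≤ n₀) :
    (chainFrom P D N h sg n₀ A k ∈ D (n₀ + k + 1) →
      chainFrom P D N h sg n₀ A (k+1) = chainFrom P D N h sg n₀ A k ∧
      phs P D N h (n₀ + k + 1) (chainFrom P D N h sg n₀ A (k+1))
        = phs P D N h (n₀ + k) (chainFrom P D N h sg n₀ A k)) ∧
    (chainFrom P D N h sg n₀ A k ∉ D (n₀ + k + 1) →
      phs P D N h (n₀ + k + 1) (chainFrom P D N h sg n₀ A (k+1))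
        = !(phs P D N h (n₀ + k) (chainFrom P D N h sg n₀ A k))) := by
  set C := chainFrom P D N h sg n₀ A k with hCdef
  have hC : C ∈ D (n₀ + k) := chain_mem (P := P) (sg := sg) N h hpart hAmem k
  have hmk : N ≤ n₀ + k := le_trans hm (Nat.le_add_right _ _)
  have hnext : chainFrom P D N h sg n₀ A (k+1) = nxt P D N h sg (n₀ + k) C := rfl
  constructor
  · intro hs
    have he : chainFrom P D N h sg n₀ A (k+1) = C := by rw [hnext, nxt, if_pos hs]
    exact ⟨he, by rw [he]; exact (step_nosplit (P := P) N h hpart hmk hC hs).2⟩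
  · intro hs
    by_cases hph : phs P D N h (n₀ + k) C = sg
    · have he : chainFrom P D N h sg n₀ A (k+1) = sch P D (n₀ + k) C := by
        rw [hnext, nxt, if_neg hs, if_pos hph]
      rw [he]
      exact (step_split (P := P) N h hpart hmk hC hs (sch_spec P hpart hC hs).1).2
    · have he : chainFrom P D N h sg n₀ A (k+1) = och P D (n₀ + k) C := by
        rw [hnext, nxt, if_neg hs, if_neg hph]
      rw [he]
      exact (step_split (P := P) N h hpart hmk hC hs (och_spec P hpart hC hs).1).2

include hpart hA hAmem in
lemma chain_splits (k : ℕ) : ∃ j, k ≤ j ∧ chainFrom P D N h sg n₀ A j ∉ D (n₀ + j + 1) := by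
  by_contra hcon
  push_neg at hcon
  have hconst : ∀ j, k ≤ j → chainFrom P D N h sg n₀ A j = chainFrom P D N h sg n₀ A k := by
    intro j hj
    induction j, hj using Nat.le_induction with
    | base => rfl
    | succ j hj ih =>
      have : chainFrom P D N h sg n₀ A (j+1) = chainFrom P D N h sg n₀ A j := by
        show nxt P D N h sg (n₀ + j) _ = _
        rw [nxt, if_pos (hcon j hj)]
      rw [this, ih]
  obtain ⟨m, hm1, hm2⟩ := hA.2 (n₀ + k) _ (chain_mem (P := P) (sg := sg) N h hpart hAmem k)
  apply hm2
  have h1 : chainFrom P D N h sg n₀ A (m - n₀) = chainFrom P D N h sg n₀ A k := by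
    apply hconst; omega
  have h2 := chain_mem (P := P) (sg := sg) N h hpart hAmem (m - n₀)
  rw [h1] at h2
  have : n₀ + (m - n₀) = m := by omega
  rwa [this] at h2

include hpart hA hAmem hn₀ in
lemma chain_good_splits (k : ℕ) :
    ∃ j, k ≤ j ∧ chainFrom P D N h sg n₀ A j ∉ D (n₀ + j + 1) ∧
      phs P D N h (n₀ + j) (chainFrom P D N h sg n₀ A j) = sg := by
  obtain ⟨j₁, hj₁, hsplit₁⟩ := chain_splits N h hpart hA hAmem (sg := sg) k
  by_cases hph₁ : phs P D N h (n₀ + j₁) (chainFrom P D N h sg n₀ A j₁) = sg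
  · exact ⟨j₁, hj₁, hsplit₁, hph₁⟩
  · -- take the least split after j₁; phases are constant in between
    have hex : ∃ j, (j₁ + 1 ≤ j ∧ chainFrom P D N h sg n₀ A j ∉ D (n₀ + j + 1)) := by
      obtain ⟨j, hj, hs⟩ := chain_splits N h hpart hA hAmem (sg := sg) (j₁ + 1)
      exact ⟨j, hj, hs⟩
    set j₂ := Nat.find hex with hj₂def
    obtain ⟨hj₂ge, hj₂split⟩ := Nat.find_spec hex
    have hconst : ∀ i, j₁ + 1 ≤ i → i ≤ j₂ →
        phs P D N h (n₀ + i) (chainFrom P D N h sg n₀ A i)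
          = phs P D N h (n₀ + (j₁+1)) (chainFrom P D N h sg n₀ A (j₁+1)) := by
      intro i hi1 hi2
      induction i, hi1 using Nat.le_induction with
      | base => rfl
      | succ i hi ih =>
        have hilt : i < j₂ := by omega
        have hnosplit : chainFrom P D N h sg n₀ A i ∈ D (n₀ + i + 1) := by
          by_contra hcon
          have hc2 : j₁ + 1 ≤ i ∧ chainFrom P D N h sg n₀ A i ∉ D (n₀ + i + 1) :=
            ⟨by omega, hcon⟩
          have hfind : j₂ ≤ i := by rw [hj₂def]; exact Nat.find_le hc2
          omega
        have hstep := (chain_phase_step N h hpart hAmem i hn₀).1 hnosplit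
        rw [show n₀ + (i+1) = n₀ + i + 1 from rfl, hstep.2]
        exact ih (by omega)
    have hflip := (chain_phase_step N h hpart hAmem j₁ hn₀).2 hsplit₁
    have hphj₂ : phs P D N h (n₀ + j₂) (chainFrom P D N h sg n₀ A j₂) = sg := by
      rw [hconst j₂ hj₂ge le_rfl, show n₀ + (j₁+1) = n₀ + j₁ + 1 from rfl, hflip]
      rcases Bool.eq_false_or_eq_true (phs P D N h (n₀ + j₁) (chainFrom P D N h sg n₀ A j₁))
        with hb | hb <;> rw [hb] at hph₁ ⊢ <;> simp_all
    exact ⟨j₂, by omega, hj₂split, hphj₂⟩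

include hpart hA hn₀ hAmem in
lemma chain_tendsto (hh : ∀ B ∈ D N, |h B| < 1) :
    Tendsto (fun k => val P D N h (n₀ + k) (chainFrom P D N h sg n₀ A k))
      atTop (𝓝 (sgn sg)) := by
  set W := Wc P D N h sg n₀ A with hWdef
  have hmono : Monotone W := monotone_nat_of_le_succ
    (fun k => (chain_W_step N h hpart hA hn₀ hAmem hh k).1)
  have hbdd : ∀ k, |W k| < 1 := fun k => chain_W_bounds N h hpart hA hn₀ hAmem hh k
  have hBddAbove : BddAbove (Set.range W) := ⟨1, by rintro x ⟨k, rfl⟩; exact (abs_lt.1 (hbdd k)).2.le⟩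
  have htendW : Tendsto W atTop (𝓝 (⨆ k, W k)) := tendsto_atTop_ciSup hmono hBddAbove
  set L := ⨆ k, W k with hLdef
  have hLle : L ≤ 1 := ciSup_le fun k => (abs_lt.1 (hbdd k)).2.le
  have hWleL : ∀ k, W k ≤ L := fun k => le_ciSup hBddAbove k
  have hW0 : -1 < W 0 := (abs_lt.1 (hbdd 0)).1
  have hL1 : L = 1 := by
    by_contra hne
    have hLlt : L < 1 := lt_of_le_of_ne hLle hne
    set ε := min ((1 - L)/2) ((1 + W 0)/2) with hεdef
    have hεpos : 0 < ε := lt_min (by linarith) (by linarith)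
    have hjump : ∀ i : ℕ, ∃ k, W 0 + i * ε ≤ W k := by
      intro i
      induction i with
      | zero => exact ⟨0, by simp⟩
      | succ i ih =>
        obtain ⟨k, hk⟩ := ih
        obtain ⟨j, hjk, hsplit, hph⟩ := chain_good_splits N h hpart hA hn₀ hAmem k
        have hstep := (chain_W_step N h hpart hA hn₀ hAmem hh j).2 hsplit hph
        have hWj : W k ≤ W j := hmono hjk
        have hεle : ε ≤ min ((1 - W j)/2) ((1 + W j)/2) := by
          apply le_min
          · exact le_trans (min_le_left _ _) (by have := hWleL j; linarith)
          · exact le_trans (min_le_right _ _) (by have := hmono (Nat.zero_le j); linarith)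
        refine ⟨j + 1, ?_⟩
        push_cast
        have hj1 : W j + ε ≤ W (j+1) := by linarith [hstep, hεle]
        nlinarith [hk, hWj]
    obtain ⟨i, hi⟩ := exists_nat_gt ((1 - W 0)/ε)
    obtain ⟨k, hk⟩ := hjump i
    have : (1 - W 0) < i * ε := by
      rw [div_lt_iff₀ hεpos] at hi; linarith
    have := (abs_lt.1 (hbdd k)).2
    linarith
  rw [hL1] at htendW
  have : (fun k => val P D N h (n₀ + k) (chainFrom P D N h sg n₀ A k))
      = fun k => sgn sg * W k := by
    funext k
    rw [hWdef, Wc, ← mul_assoc, sgn_mul_self, one_mul]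
  rw [this]
  have := htendW.const_mul (sgn sg)
  simpa using this

end Chain
section Final
open scoped Classical
set_option linter.unusedSectionVars false

variable [MeasurableSpace Ω] {P : Measure Ω} [IsProbabilityMeasure P]
  {D : ℕ → Finset (Set Ω)} (N : ℕ) (h : Set Ω → ℝ)
  (hpart : IsPartitionSeq D) (hA : AssumptionA P D)

include hpart hA in
lemma dense_strategy (hh : ∀ B ∈ D N, |h B| < 1) (sg : Bool) :
    Dense {x : Kt D | Tendsto (fun n => mfun P D N h n (x.1 n)) atTop (𝓝 (sgn sg))} := by
  rw [dense_iff_inter_open]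
  intro U hU hUne
  obtain ⟨x, hxU⟩ := hUne
  obtain ⟨V, hV, hVeq⟩ := isOpen_induced_iff.1 hU
  have hxV : x.1 ∈ V := by rw [← hVeq] at hxU; exact hxU
  obtain ⟨I, u, hu, hpi⟩ := isOpen_pi_iff.1 hV x.1 hxV
  set n₀ := max N (I.sup id) with hn₀def
  have hn₀N : N ≤ n₀ := le_max_left _ _
  have hAmem : x.1 n₀ ∈ D n₀ := x.2.1 n₀
  set c := chainFrom P D N h sg n₀ (x.1 n₀) with hc
  set y : ℕ → Set Ω := fun i => if i ≤ n₀ then x.1 i else c (i - n₀) with hy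
  have hy_le : ∀ i, i ≤ n₀ → y i = x.1 i := by
    intro i hi; rw [hy]; exact if_pos hi
  have hy_gt : ∀ i, n₀ < i → y i = c (i - n₀) := by
    intro i hi; rw [hy]; exact if_neg (by omega)
  have hy_chain : ∀ i, n₀ ≤ i → y i = c (i - n₀) := by
    intro i hi
    rcases eq_or_lt_of_le hi with heq | hlt
    · rw [hy_le i (by omega), show i - n₀ = 0 by omega, ← heq]; rfl
    · exact hy_gt i hlt
  have hy_mem : ∀ i, y i ∈ D i := by
    intro i
    by_cases hi : i ≤ n₀
    · rw [hy_le i hi]; exact x.2.1 i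
    · rw [hy_gt i (by omega)]
      have := chain_mem (P := P) (sg := sg) N h hpart hAmem (i - n₀)
      rwa [show n₀ + (i - n₀) = i by omega] at this
  have hy_step : ∀ i, y (i+1) ⊆ y i := by
    intro i
    by_cases hi1 : i + 1 ≤ n₀
    · rw [hy_le (i+1) hi1, hy_le i (by omega)]
      exact x.2.2 i (i+1) (Nat.le_succ i)
    · have hchain := chain_subset (P := P) (sg := sg) N h hpart hAmem
      by_cases hi : i ≤ n₀
      · have hieq : i = n₀ := by omega
        rw [hy_le i (by omega), hy_gt (i+1) (by omega), show i + 1 - n₀ = 1 by omega, hieq]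
        exact hchain 0
      · rw [hy_gt (i+1) (by omega), hy_gt i (by omega),
          show i + 1 - n₀ = (i - n₀) + 1 by omega]
        exact hchain (i - n₀)
  have hy_mono : ∀ n m : ℕ, n ≤ m → y m ⊆ y n := by
    intro n m hnm
    induction m, hnm using Nat.le_induction with
    | base => exact subset_rfl
    | succ m hm ih => exact (hy_step m).trans ih
  refine ⟨⟨y, hy_mem, hy_mono⟩, ?_, ?_⟩
  · -- membership in U
    rw [← hVeq]
    show y ∈ V
    apply hpi
    intro i hi
    have hiI : i ≤ n₀ := le_trans (Finset.le_sup (f := id) hi) (le_max_right _ _)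
    rw [hy_le i hiI]
    exact (hu i hi).2
  · -- membership in the tendsto set
    show Tendsto (fun n => mfun P D N h n (y n)) atTop (𝓝 (sgn sg))
    have h1 := chain_tendsto (sg := sg) N h hpart hA hn₀N hAmem hh
    have h2 : Tendsto (fun n : ℕ => n - n₀) atTop atTop := tendsto_sub_atTop_nat n₀
    have h3 := h1.comp h2
    apply h3.congr'
    filter_upwards [eventually_ge_atTop n₀] with n hn
    show val P D N h (n₀ + (n - n₀)) (c (n - n₀)) = mfun P D N h n (y n)
    rw [show n₀ + (n - n₀) = n by omega, hy_chain n hn, mfun, if_pos]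
    have := chain_mem (P := P) (sg := sg) N h hpart hAmem (n - n₀)
    rwa [show n₀ + (n - n₀) = n by omega] at this

end Final
/-- Lemma (l:infty): given `N` and `h ∈ L^∞(Σ_N)` (represented by its values on the atoms
of `D N`) with `‖h‖_∞ < 1`, there is a martingale `f` adapted to the filtration with
(a) `f_N = h`, (b) `‖f‖_∞ ≤ 1`, (c) `lim f_n(x) = 1` on a dense subset of `K` and
(d) `lim f_n(x) = -1` on a dense subset of `K`. -/
theorem statement17 [MeasurableSpace Ω] (P : Measure Ω) [IsProbabilityMeasure P]
    (D : ℕ → Finset (Set Ω)) (hpart : IsPartitionSeq D) (hA : AssumptionA P D)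
    (N : ℕ) (h : Set Ω → ℝ) (hh : ∀ A ∈ D N, |h A| < 1) :
    ∃ f : ℕ → Set Ω → ℝ, IsMart P D f ∧
      (∀ A ∈ D N, f N A = h A) ∧
      martNorm P D ∞ f ≤ 1 ∧
      Dense {x : Kt D | Filter.Tendsto (fun n => f n (x.1 n)) Filter.atTop (nhds 1)} ∧
      Dense {x : Kt D | Filter.Tendsto (fun n => f n (x.1 n)) Filter.atTop (nhds (-1))} := by
  refine ⟨mfun P D N h, mfun_isMart N h hpart hA hh, ?_, mfun_martNorm_le N h hpart hA hh,
    ?_, ?_⟩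
  · intro A hAN
    rw [mfun, if_pos hAN, val_N]
  · have := dense_strategy N h hpart hA hh true
    simpa [sgn] using this
  · have := dense_strategy N h hpart hA hh false
    simpa [sgn] using this

end MartingalePaper
end
end
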